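/- arXiv:1906.07430 — 5 statements merged into one kernel-verified Lean document; each statement's English description precedes it below -/
import Mathlib

section
/- If an undirected binary phylogenetic network N with distinguished edge e_ρ and reticulation set R is orientable, then (N, e_ρ, R) has no reticulation cut. -/
open Classical

/-- Indegree of a vertex in a digraph given by a relation. -/
noncomputable def inDeg {W : Type} (D : W → W → Prop) (b : W) : ℕ :=
  Nat.card {a : W // D a b}

/-- Outdegree of a vertex in a digraph given by a relation. -/
noncomputable def outDeg {W : Type} (D : W → W → Prop) (a : W) : ℕ :=
  Nat.card {b : W // D a b}

/-- A digraph is acyclic if it has no directed cycle. -/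
def DigraphAcyclic {W : Type} (D : W → W → Prop) : Prop :=
  ∀ a : W, ¬ Relation.TransGen D a a

/-- `D` is an orientation of the undirected graph `H`: every arc of `D` lies on an
edge of `H`, and every edge of `H` is given exactly one direction. -/
def IsOrientationOf {W : Type} (H : SimpleGraph W) (D : W → W → Prop) : Prop :=
  (∀ a b, D a b → H.Adj a b) ∧ (∀ a b, H.Adj a b → (D a b ↔ ¬ D b a))

/-- The graph obtained from `G` by subdividing the edge `{u,v}` with a new vertex
(represented by `none`). -/
def subdivide {V : Type} (G : SimpleGraph V) (u v : V) : SimpleGraph (Option V) where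
  Adj a b := match a, b with
    | some a', some b' => G.Adj a' b' ∧ ¬ (s(a', b') = s(u, v))
    | some a', none => a' = u ∨ a' = v
    | none, some b' => b' = u ∨ b' = v
    | none, none => False
  symm := by
    constructor
    intro a b h
    match a, b with
    | some a', some b' =>
        exact ⟨h.1.symm, fun he => h.2 (by rwa [Sym2.eq_swap] at he)⟩
    | some a', none => exact h
    | none, some b' => exact h
  loopless := by
    constructor
    intro a h
    match a with
    | some a' => exact G.loopless.irrefl a' h.1
    | none => exact h

/-- An undirected binary phylogenetic network: a connected graph in which every
vertex has degree `1` (a leaf) or degree `3`. -/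
def IsUndirBinNet {V : Type} [Fintype V] (G : SimpleGraph V) [DecidableRel G.Adj] : Prop :=
  G.Connected ∧ ∀ w : V, G.degree w = 1 ∨ G.degree w = 3

/-- An orientation of the binary network `G` with root subdividing the edge `{u,v}`
and reticulation set `R`: an acyclic orientation of the subdivided graph in which
the root has indegree `0`, the vertices of `R` have indegree `2` and all other
vertices have indegree `1`. -/
def IsBinOrientation {V : Type} [Fintype V] (G : SimpleGraph V) (u v : V) (R : Set V)
    (D : Option V → Option V → Prop) : Prop :=
  IsOrientationOf (subdivide G u v) D ∧ DigraphAcyclic D ∧ inDeg D none = 0 ∧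
    ∀ w : V, (w ∈ R ↔ inDeg D (some w) = 2) ∧ (w ∉ R → inDeg D (some w) = 1)


/-- A reticulation cut for `(G, {u,v}, R)`: a pair `(R', E')` with `R' ⊆ R`,
`|R'| = |E'|`, `E'` an edge-cut of the subdivided graph such that each edge of `E'`
is incident to exactly one vertex of `R'`, each vertex of `R'` is incident to
exactly one edge of `E'`, and the root `ρ` is separated from every vertex of `R'`. -/
def IsRetCut {V : Type} (G : SimpleGraph V) (u v : V) (R : Set V)
    (R' : Set V) (E' : Set (Sym2 (Option V))) : Prop :=
  R' ⊆ R ∧ E' ⊆ (subdivide G u v).edgeSet ∧ R'.ncard = E'.ncard ∧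
  ¬ ((subdivide G u v).deleteEdges E').Connected ∧
  (∀ e ∈ E', ∃! r : V, r ∈ R' ∧ (some r : Option V) ∈ e) ∧
  (∀ r ∈ R', ∃! e : Sym2 (Option V), e ∈ E' ∧ (some r : Option V) ∈ e) ∧
  (∀ r ∈ R', ¬ ((subdivide G u v).deleteEdges E').Reachable none (some r))

/-- If `(N, e_ρ, R)` is orientable, then `(N, e_ρ, R)` has no reticulation cut. -/
theorem no_retcut_of_orientable {V X : Type} [Fintype V] [DecidableEq V]
    (G : SimpleGraph V) [DecidableRel G.Adj] (hnet : IsUndirBinNet G)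
    (labels : X ≃ {w : V // G.degree w = 1})
    (u v : V) (he : G.Adj u v) (R : Set V)
    (hor : ∃ D : Option V → Option V → Prop, IsBinOrientation G u v R D) :
    ¬ ∃ (R' : Set V) (E' : Set (Sym2 (Option V))), IsRetCut G u v R R' E' := by
  rintro ⟨R', E', hR'R, hE'sub, hcard, hdisc, hedge, hret, hsep⟩
  obtain ⟨D, horient, hacyc, hroot, hdeg⟩ := hor
  set H := (subdivide G u v).deleteEdges E' with hH
  set S : Set (Option V) := {x | ¬ H.Reachable none x} with hSdef
  -- S is nonempty since H is disconnected
  have hSne : S.Nonempty := by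
    rw [Set.nonempty_iff_ne_empty]
    intro hempty
    apply hdisc
    have hall : ∀ x, H.Reachable none x := by
      intro x
      by_contra hx
      have : x ∈ S := hx
      rw [hempty] at this
      exact this
    exact (SimpleGraph.connected_iff H).mpr ⟨fun x y => (hall x).symm.trans (hall y), ⟨none⟩⟩
  -- a minimal element of S with respect to D
  have hirr : IsIrrefl (Option V) (Relation.TransGen D) := ⟨fun a h => hacyc a h⟩
  have hwf : WellFounded (Relation.TransGen D) :=
    Finite.wellFounded_of_trans_of_irrefl _
  obtain ⟨s, hsS, hmin⟩ := hwf.has_min S hSne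
  have hmin' : ∀ a, D a s → a ∉ S :=
    fun a hDa haS => hmin a haS (Relation.TransGen.single hDa)
  obtain ⟨w, rfl⟩ : ∃ w, s = some w := by
    cases s with
    | none => exact absurd (SimpleGraph.Reachable.refl none) hsS
    | some w => exact ⟨w, rfl⟩
  -- every in-arc of s crosses the cut
  have hcross : ∀ a, D a (some w) → s(a, (some w : Option V)) ∈ E' := by
    intro a ha
    by_contra hne
    have haS : a ∉ S := hmin' a ha
    have hra : H.Reachable none a := by
      by_contra hra
      exact haS hra
    have hadj : H.Adj a (some w) := by
      rw [hH, SimpleGraph.deleteEdges_adj]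
      exact ⟨horient.1 _ _ ha, hne⟩
    exact hsS (hra.trans hadj.reachable)
  -- s has at least one in-arc
  have hcard12 : inDeg D (some w) = 1 ∨ inDeg D (some w) = 2 := by
    by_cases hw : w ∈ R
    · exact Or.inr ((hdeg w).1.mp hw)
    · exact Or.inl ((hdeg w).2 hw)
  have hpos : 0 < Nat.card {a // D a (some w)} := by
    have : inDeg D (some w) = Nat.card {a // D a (some w)} := rfl
    rcases hcard12 with h | h <;> rw [this] at h <;> omega
  obtain ⟨⟨a, ha⟩⟩ := (Nat.card_pos_iff.mp hpos).1
  -- w is a reticulation of the cut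
  have hwR' : w ∈ R' := by
    have he1 : s(a, (some w : Option V)) ∈ E' := hcross a ha
    obtain ⟨r, ⟨hrR', hrmem⟩, -⟩ := hedge _ he1
    rcases Sym2.mem_iff.mp hrmem with h | h
    · exfalso
      have hnotS : (some r : Option V) ∉ S := h ▸ hmin' a ha
      exact hnotS (hsep r hrR')
    · injection h with h
      exact h ▸ hrR'
  -- hence s has two in-arcs, giving two distinct cut edges at w
  have h2 : Nat.card {a // D a (some w)} = 2 := (hdeg w).1.mp (hR'R hwR')
  obtain ⟨⟨a₁, ha₁⟩, ⟨a₂, ha₂⟩, hne, -⟩ := Nat.card_eq_two_iff.mp h2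
  obtain ⟨e, -, hu⟩ := hret w hwR'
  have he₁ : e = s(a₁, (some w : Option V)) :=
    (hu _ ⟨hcross a₁ ha₁, Sym2.mem_mk_right _ _⟩).symm
  have he₂ : e = s(a₂, (some w : Option V)) :=
    (hu _ ⟨hcross a₂ ha₂, Sym2.mem_mk_right _ _⟩).symm
  have heq : a₁ = a₂ := by
    have := he₁.symm.trans he₂
    rcases Sym2.eq_iff.mp this with ⟨h, -⟩ | ⟨h1, h2'⟩
    · exact h
    · exact h1.trans h2'
  exact hne (Subtype.ext heq)
end

section
/- Let N = (V,E,X) be an undirected binary phylogenetic network, e_ρ ∈ E, and R ⊆ V with |R| = |E| − |V| + 1. Then (N, e_ρ, R) is orientable if and only if (N, e_ρ, R) has no reticulation cut. -/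
open Classical

set_option linter.unusedSectionVars false
set_option linter.unusedVariables false
section Aux

variable {V : Type} [Fintype V] [DecidableEq V]

/-- Demand function: required indegrees. -/
noncomputable def dem (R : Set V) : Option V → ℕ :=
  fun w => match w with
  | none => 0
  | some x => if x ∈ R then 2 else 1

variable {G : SimpleGraph V} {u v : V}

lemma subdivide_adj_ss {a b : V} :
    (subdivide G u v).Adj (some a) (some b) ↔ G.Adj a b ∧ ¬ (s(a,b) = s(u,v)) := Iff.rfl

lemma subdivide_adj_ns {b : V} : (subdivide G u v).Adj none (some b) ↔ b = u ∨ b = v := Iff.rfl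

lemma subdivide_adj_sn {a : V} : (subdivide G u v).Adj (some a) none ↔ a = u ∨ a = v := Iff.rfl

lemma subdivide_adj_nn : ¬ (subdivide G u v).Adj none none := fun h => h

lemma reachable_some (hG : G.Connected) (a b : V) :
    (subdivide G u v).Reachable (some a) (some b) := by
  obtain ⟨p⟩ := hG.preconnected a b
  induction p with
  | nil => exact SimpleGraph.Reachable.refl _
  | @cons a c b h p ih =>
    refine SimpleGraph.Reachable.trans ?_ ih
    by_cases hs : s(a, c) = s(u, v)
    · rw [Sym2.eq_iff] at hs
      have h1 : (subdivide G u v).Adj (some a) none := by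
        rw [subdivide_adj_sn]; rcases hs with ⟨h1, h2⟩ | ⟨h1, h2⟩ <;> simp [h1, h2]
      have h2 : (subdivide G u v).Adj none (some c) := by
        rw [subdivide_adj_ns]; rcases hs with ⟨h1', h2'⟩ | ⟨h1', h2'⟩ <;> simp [h1', h2']
      exact h1.reachable.trans h2.reachable
    · exact (subdivide_adj_ss.2 ⟨h, hs⟩).reachable

lemma subdivide_reachable_none (hG : G.Connected) (he : G.Adj u v) (w : Option V) :
    (subdivide G u v).Reachable none w := by
  have h1 : (subdivide G u v).Adj none (some u) := subdivide_adj_ns.2 (Or.inl rfl)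
  match w with
  | none => exact SimpleGraph.Reachable.refl _
  | some x => exact h1.reachable.trans (reachable_some hG u x)

lemma subdivide_connected (hG : G.Connected) (he : G.Adj u v) :
    (subdivide G u v).Connected := by
  rw [SimpleGraph.connected_iff]
  refine ⟨fun a b => ?_, ⟨none⟩⟩
  exact (subdivide_reachable_none hG he a).symm.trans (subdivide_reachable_none hG he b)

lemma subdivide_edgeSet :
    (subdivide G u v).edgeSet =
      insert s((none : Option V), some u) (insert s((none : Option V), some v)
        (Sym2.map some '' (G.edgeSet \ {s(u,v)}))) := by
  have hinj : Function.Injective (Sym2.map (some : V → Option V)) :=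
    Sym2.map.injective (Option.some_injective V)
  ext e
  induction e using Sym2.ind with
  | _ a b =>
    simp only [SimpleGraph.mem_edgeSet, Set.mem_insert_iff, Set.mem_image]
    constructor
    · intro h
      match a, b with
      | none, none => exact absurd h subdivide_adj_nn
      | none, some b' =>
        rcases subdivide_adj_ns.1 h with h' | h'
        · exact Or.inl (by rw [h'])
        · exact Or.inr (Or.inl (by rw [h']))
      | some a', none =>
        rcases subdivide_adj_sn.1 h with h' | h'
        · exact Or.inl (by rw [h', Sym2.eq_swap])
        · exact Or.inr (Or.inl (by rw [h', Sym2.eq_swap]))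
      | some a', some b' =>
        obtain ⟨hab, hne⟩ := subdivide_adj_ss.1 h
        refine Or.inr (Or.inr ⟨s(a', b'), ⟨hab, ?_⟩, by rw [Sym2.map_pair_eq]⟩)
        simpa using hne
    · intro h
      rcases h with h | h | ⟨e', ⟨he', hne⟩, hmap⟩
      · rw [Sym2.eq_iff] at h
        rcases h with ⟨h1, h2⟩ | ⟨h1, h2⟩ <;> subst h1 <;> subst h2
        · exact subdivide_adj_ns.2 (Or.inl rfl)
        · exact subdivide_adj_sn.2 (Or.inl rfl)
      · rw [Sym2.eq_iff] at h
        rcases h with ⟨h1, h2⟩ | ⟨h1, h2⟩ <;> subst h1 <;> subst h2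
        · exact subdivide_adj_ns.2 (Or.inr rfl)
        · exact subdivide_adj_sn.2 (Or.inr rfl)
      · induction e' using Sym2.ind with
        | _ x y =>
          rw [Sym2.map_pair_eq, Sym2.eq_iff] at hmap
          simp only [Set.mem_singleton_iff] at hne
          rcases hmap with ⟨h1, h2⟩ | ⟨h1, h2⟩
          · rw [← h1, ← h2]; exact subdivide_adj_ss.2 ⟨he', hne⟩
          · rw [← h1, ← h2]
            exact subdivide_adj_ss.2 ⟨he'.symm, fun hc => hne (by rw [← hc, Sym2.eq_swap])⟩

lemma subdivide_edgeSet_ncard (he : G.Adj u v) :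
    (subdivide G u v).edgeSet.ncard = G.edgeSet.ncard + 1 := by
  have hinj : Function.Injective (Sym2.map (some : V → Option V)) :=
    Sym2.map.injective (Option.some_injective V)
  have hmem : s(u, v) ∈ G.edgeSet := he
  have h1 : ((G.edgeSet \ {s(u,v)}) : Set (Sym2 V)).ncard + 1 = G.edgeSet.ncard :=
    Set.ncard_diff_singleton_add_one hmem
  have h2 : (Sym2.map (some : V → Option V) '' (G.edgeSet \ {s(u,v)})).ncard
      = (G.edgeSet \ {s(u,v)}).ncard := Set.ncard_image_of_injOn (hinj.injOn)
  have hnone1 : s((none : Option V), some u) ∉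
      (Sym2.map (some : V → Option V) '' (G.edgeSet \ {s(u,v)})) := by
    rintro ⟨e', -, hmap⟩
    induction e' using Sym2.ind with
    | _ x y =>
      rw [Sym2.map_pair_eq, Sym2.eq_iff] at hmap
      rcases hmap with ⟨h', -⟩ | ⟨-, h'⟩ <;> simp at h'
  have hnone2 : s((none : Option V), some v) ∉
      (Sym2.map (some : V → Option V) '' (G.edgeSet \ {s(u,v)})) := by
    rintro ⟨e', -, hmap⟩
    induction e' using Sym2.ind with
    | _ x y =>
      rw [Sym2.map_pair_eq, Sym2.eq_iff] at hmap
      rcases hmap with ⟨h', -⟩ | ⟨-, h'⟩ <;> simp at h'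
  have hne : s((none : Option V), some u) ∉
      insert s((none : Option V), some v) (Sym2.map (some : V → Option V) '' (G.edgeSet \ {s(u,v)})) := by
    intro hc
    rcases hc with hc | hc
    · rw [Sym2.eq_iff] at hc
      rcases hc with ⟨-, h2'⟩ | ⟨h1', -⟩
      · exact he.ne (Option.some_injective V h2'.symm).symm
      · simp at h1'
    · exact hnone1 hc
  rw [subdivide_edgeSet, Set.ncard_insert_of_notMem hne, Set.ncard_insert_of_notMem hnone2, h2]
  omega

end Aux
section Count

lemma dem_sum {V : Type} [Fintype V] [DecidableEq V] (R : Set V) :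
    ∑ w : Option V, dem R w = R.ncard + Fintype.card V := by
  classical
  rw [Fintype.sum_option]
  have h0 : dem R none = 0 := rfl
  have h1 : ∀ x : V, dem R (some x) = (if x ∈ R then 1 else 0) + 1 := by
    intro x
    show (if x ∈ R then 2 else 1) = _
    by_cases hx : x ∈ R <;> simp [hx]
  rw [h0]
  calc 0 + ∑ x : V, dem R (some x)
      = ∑ x : V, ((if x ∈ R then 1 else 0) + 1) := by
        rw [zero_add]; exact Finset.sum_congr rfl (fun x _ => h1 x)
    _ = (∑ x : V, if x ∈ R then 1 else 0) + ∑ _x : V, 1 := Finset.sum_add_distrib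
    _ = R.ncard + Fintype.card V := by
        congr 1
        · rw [← Finset.card_filter, Set.ncard_eq_toFinset_card' R]
          congr 1
          ext x
          simp
        · simp
end Count

section ArcCount

variable {W : Type} [Fintype W]

/-- The set of arcs of an orientation is equinumerous with the edge set. -/
lemma sum_inDeg_eq {H : SimpleGraph W} {D : W → W → Prop} (hD : IsOrientationOf H D) :
    ∑ b : W, inDeg D b = H.edgeSet.ncard := by
  classical
  have e1 : {p : W × W // D p.1 p.2} ≃ Σ b : W, {a : W // D a b} :=
    ((Equiv.prodComm W W).subtypeEquiv (fun p => Iff.rfl)).trans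
      (Equiv.subtypeProdEquivSigmaSubtype (fun b a => D a b))
  have hcard1 : Nat.card {p : W × W // D p.1 p.2} = ∑ b : W, inDeg D b := by
    rw [Nat.card_congr e1]
    rw [Nat.card_eq_fintype_card, Fintype.card_sigma]
    exact Finset.sum_congr rfl (fun b _ => (Nat.card_eq_fintype_card).symm)
  have hcard2 : Nat.card {p : W × W // D p.1 p.2} = H.edgeSet.ncard := by
    rw [← Nat.card_coe_set_eq]
    refine Nat.card_eq_of_bijective
      (fun p => ⟨s(p.1.1, p.1.2), hD.1 _ _ p.2⟩) ⟨?_, ?_⟩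
    · rintro ⟨⟨a, b⟩, hab⟩ ⟨⟨c, d⟩, hcd⟩ hEq
      replace hEq : s(a, b) = s(c, d) := congrArg Subtype.val hEq
      rw [Sym2.eq_iff] at hEq
      rcases hEq with ⟨h1, h2⟩ | ⟨h1, h2⟩
      · subst h1; subst h2; rfl
      · subst h1; subst h2
        exact absurd hcd ((hD.2 _ _ (hD.1 _ _ hab)).1 hab)
    · rintro ⟨e, he⟩
      induction e using Sym2.ind with
      | _ a b =>
        have hadj : H.Adj a b := he
        by_cases hab : D a b
        · exact ⟨⟨(a, b), hab⟩, rfl⟩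
        · have hba : D b a := (hD.2 b a hadj.symm).2 hab
          exact ⟨⟨(b, a), hba⟩, by simp [Sym2.eq_swap]⟩
  omega

/-- In an acyclic digraph, every nonempty set has a source within the set. -/
lemma exists_source {D : W → W → Prop} (hac : DigraphAcyclic D) (T : Set W)
    (hT : T.Nonempty) : ∃ z ∈ T, ∀ a ∈ T, ¬ D a z := by
  haveI : IsTrans W (Relation.TransGen D) := ⟨fun _ _ _ h1 h2 => h1.trans h2⟩
  haveI : IsIrrefl W (Relation.TransGen D) := ⟨hac⟩
  obtain ⟨z, hzT, hmin⟩ :=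
    (Finite.wellFounded_of_trans_of_irrefl (Relation.TransGen D)).has_min T hT
  exact ⟨z, hzT, fun a ha hDa => hmin a ha (Relation.TransGen.single hDa)⟩

end ArcCount
section Greedy

variable {W : Type} [Fintype W] [DecidableEq W]

lemma idx_append_mem {a : W} {l₁ l₂ : List W} (h : a ∈ l₁) :
    (l₁ ++ l₂).idxOf a = l₁.idxOf a := by
  induction l₁ with
  | nil => simp at h
  | cons b l ih =>
    by_cases hb : b = a
    · simp [List.idxOf_cons, hb]
    · have ha : a ∈ l := by
        rcases List.mem_cons.1 h with h' | h'
        · exact absurd h'.symm hb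
        · exact h'
      simp [List.idxOf_cons, hb, ih ha]

lemma idx_append_not_mem {a : W} {l₁ l₂ : List W} (h : a ∉ l₁) :
    (l₁ ++ l₂).idxOf a = l₁.length + l₂.idxOf a := by
  induction l₁ with
  | nil => simp
  | cons b l ih =>
    have hb : b ≠ a := fun hc => h (by rw [hc]; exact List.mem_cons_self)
    have ha : a ∉ l := fun hc => h (List.mem_cons_of_mem b hc)
    simp [List.idxOf_cons, hb, ih ha]
    omega

lemma greedy_order (H : SimpleGraph W) (d : W → ℕ)
    (hC : ∀ T : Set W, T.Nonempty → ∃ w ∈ T, d w ≤ Nat.card {y : W // H.Adj w y ∧ y ∉ T})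
    (T : Finset W) :
    ∃ L : List W, L.Nodup ∧ L.toFinset = T ∧
      ∀ (L₁ L₂ : List W) (w : W), L = L₁ ++ w :: L₂ →
        d w ≤ Nat.card {y : W // H.Adj w y ∧ y ∉ L₂} := by
  classical
  induction T using Finset.strongInduction with
  | _ T ih =>
    by_cases hT : T = ∅
    · refine ⟨[], List.nodup_nil, by simp [hT], fun L₁ L₂ w h => absurd h (by simp)⟩
    · have hTn : (↑T : Set W).Nonempty := by
        obtain ⟨w, hw⟩ := Finset.nonempty_iff_ne_empty.2 hT
        exact ⟨w, hw⟩
      obtain ⟨w, hwT, hw⟩ := hC ↑T hTn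
      have hwT' : w ∈ T := hwT
      obtain ⟨L', hnd, htf, hinv⟩ := ih (T.erase w) (Finset.erase_ssubset hwT')
      refine ⟨w :: L', ?_, ?_, ?_⟩
      · rw [List.nodup_cons]
        refine ⟨?_, hnd⟩
        rw [← List.mem_toFinset, htf]
        exact Finset.notMem_erase w T
      · rw [List.toFinset_cons, htf, Finset.insert_erase hwT']
      · intro L₁ L₂ w₀ hsplit
        cases L₁ with
        | nil =>
          simp only [List.nil_append, List.cons.injEq] at hsplit
          obtain ⟨hw0, hL2⟩ := hsplit
          subst hw0; subst hL2
          refine le_trans hw (Nat.card_le_card_of_injective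
            (fun y => ⟨y.1, y.2.1, fun hy => y.2.2 ?_⟩) ?_)
          · have : y.1 ∈ T.erase w := by rw [← htf]; exact List.mem_toFinset.2 hy
            exact Finset.mem_coe.2 (Finset.mem_of_mem_erase this)
          · rintro ⟨y1, h1⟩ ⟨y2, h2⟩ hEq
            simpa using hEq
        | cons a L₁' =>
          simp only [List.cons_append, List.cons.injEq] at hsplit
          exact hinv L₁' L₂ w₀ hsplit.2

lemma exists_orientation (H : SimpleGraph W) (d : W → ℕ)
    (hC : ∀ T : Set W, T.Nonempty → ∃ w ∈ T, d w ≤ Nat.card {y : W // H.Adj w y ∧ y ∉ T})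
    (hsum : ∑ w : W, d w = H.edgeSet.ncard) :
    ∃ D : W → W → Prop, IsOrientationOf H D ∧ DigraphAcyclic D ∧ ∀ w, inDeg D w = d w := by
  classical
  obtain ⟨L, hnd, htf, hinv⟩ := greedy_order H d hC Finset.univ
  have hmemL : ∀ y : W, y ∈ L := fun y => by
    rw [← List.mem_toFinset, htf]; exact Finset.mem_univ y
  refine ⟨fun a b => H.Adj a b ∧ L.idxOf a < L.idxOf b, ?_, ?_, ?_⟩
  case refine_1 =>
    constructor
    · exact fun a b h => h.1
    · intro a b hab
      have hne : L.idxOf a ≠ L.idxOf b := fun h =>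
        hab.ne ((List.idxOf_inj (hmemL a)).1 h)
      constructor
      · rintro ⟨-, hlt⟩ ⟨-, hlt'⟩; omega
      · intro h
        refine ⟨hab, ?_⟩
        rcases lt_or_gt_of_ne hne with h' | h'
        · exact h'
        · exact absurd ⟨hab.symm, h'⟩ h
  case refine_2 =>
    intro a ha
    have key : ∀ x y : W, Relation.TransGen
        (fun a b => H.Adj a b ∧ L.idxOf a < L.idxOf b) x y →
        L.idxOf x < L.idxOf y := by
      intro x y h
      induction h with
      | single h => exact h.2
      | tail _ h ih => exact lt_trans ih h.2
    exact lt_irrefl _ (key a a ha)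
  case refine_3 =>
    have hlow : ∀ w, d w ≤ inDeg (fun a b => H.Adj a b ∧ L.idxOf a < L.idxOf b) w := by
      intro w
      obtain ⟨L₁, L₂, hsplit⟩ := List.append_of_mem (hmemL w)
      have hkey := hinv L₁ L₂ w hsplit
      have hnd' : (L₁ ++ w :: L₂).Nodup := hsplit ▸ hnd
      rw [List.nodup_append] at hnd'
      obtain ⟨hnd1, hnd2, hdisj⟩ := hnd'
      have hwL₁ : w ∉ L₁ := fun hc => hdisj w hc w List.mem_cons_self rfl
      have hidxw : L.idxOf w = L₁.length := by
        rw [hsplit, idx_append_not_mem hwL₁, List.idxOf_cons_self]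
        omega
      refine le_trans hkey (Nat.card_le_card_of_injective (fun y => ⟨y.1, y.2.1.symm, ?_⟩) ?_)
      · -- L.idxOf y.1 < L.idxOf w
        have hyw : y.1 ≠ w := y.2.1.ne'
        have hyL : y.1 ∈ L := hmemL y.1
        have hyL₁ : y.1 ∈ L₁ := by
          rw [hsplit, List.mem_append, List.mem_cons] at hyL
          rcases hyL with h' | h' | h'
          · exact h'
          · exact absurd h' hyw
          · exact absurd h' y.2.2
        rw [hidxw, hsplit, idx_append_mem hyL₁]
        exact List.idxOf_lt_length_iff.2 hyL₁
      · rintro ⟨y1, h1⟩ ⟨y2, h2⟩ hEq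
        simpa using hEq
    intro w
    have hsum2 : ∑ w : W, inDeg (fun a b => H.Adj a b ∧ L.idxOf a < L.idxOf b) w
        = H.edgeSet.ncard := by
      apply sum_inDeg_eq
      constructor
      · exact fun a b h => h.1
      · intro a b hab
        have hne : L.idxOf a ≠ L.idxOf b := fun h =>
          hab.ne ((List.idxOf_inj (hmemL a)).1 h)
        constructor
        · rintro ⟨-, hlt⟩ ⟨-, hlt'⟩; omega
        · intro h
          refine ⟨hab, ?_⟩
          rcases lt_or_gt_of_ne hne with h' | h'
          · exact h'
          · exact absurd ⟨hab.symm, h'⟩ h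
    have := (Finset.sum_eq_sum_iff_of_le (fun i _ => hlow i)).1 (by rw [hsum, hsum2])
    exact (this w (Finset.mem_univ w)).symm

end Greedy
section CutLemmas

variable {V : Type} [Fintype V] [DecidableEq V] {G : SimpleGraph V} {u v : V} {R : Set V}

lemma dem_some (R : Set V) (x : V) : dem R (some x) = if x ∈ R then 2 else 1 := rfl

lemma dem_none (R : Set V) : dem R none = 0 := rfl

lemma orientation_exit {D : Option V → Option V → Prop} (hD : IsBinOrientation G u v R D)
    (T : Set (Option V)) (hT : T.Nonempty) :
    ∃ w ∈ T, dem R w ≤ Nat.card {y : Option V // (subdivide G u v).Adj w y ∧ y ∉ T} := by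
  obtain ⟨horient, hacyc, hroot, hdeg⟩ := hD
  obtain ⟨z, hzT, hsrc⟩ := exists_source hacyc T hT
  refine ⟨z, hzT, ?_⟩
  have hdz : inDeg D z = dem R z := by
    match z with
    | none => rw [hroot, dem_none]
    | some x =>
      rw [dem_some]
      by_cases hx : x ∈ R
      · rw [(hdeg x).1.1 hx]; simp [hx]
      · rw [(hdeg x).2 hx]; simp [hx]
  rw [← hdz]
  exact Nat.card_le_card_of_injective
    (fun a => ⟨a.1, (horient.1 _ _ a.2).symm, fun hc => hsrc a.1 hc a.2⟩)
    (by rintro ⟨a1, h1⟩ ⟨a2, h2⟩ hEq; simpa using hEq)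

lemma no_exit_retcut (T : Set (Option V)) (hT : T.Nonempty)
    (hbad : ∀ w ∈ T,
      ¬ (dem R w ≤ Nat.card {y : Option V // (subdivide G u v).Adj w y ∧ y ∉ T})) :
    ∃ (R' : Set V) (E' : Set (Sym2 (Option V))), IsRetCut G u v R R' E' := by
  classical
  have hlt : ∀ w ∈ T,
      Nat.card {y : Option V // (subdivide G u v).Adj w y ∧ y ∉ T} < dem R w :=
    fun w hw => lt_of_not_ge (hbad w hw)
  have hnone : (none : Option V) ∉ T := by
    intro hc
    exact hbad none hc (by rw [dem_none]; exact Nat.zero_le _)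
  -- R' and E'
  set R' : Set V := {r | some r ∈ T ∧ ∃ b, b ∉ T ∧ (subdivide G u v).Adj (some r) b} with hR'def
  set E' : Set (Sym2 (Option V)) :=
    {e | ∃ a b, a ∈ T ∧ b ∉ T ∧ (subdivide G u v).Adj a b ∧ e = s(a, b)} with hE'def
  -- members of R' are in R
  have hRR : R' ⊆ R := by
    rintro r ⟨hrT, b, hbT, hadj⟩
    have hpos : 0 < Nat.card {y : Option V // (subdivide G u v).Adj (some r) y ∧ y ∉ T} := by
      have : Nonempty {y : Option V // (subdivide G u v).Adj (some r) y ∧ y ∉ T} :=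
        ⟨⟨b, hadj, hbT⟩⟩
      exact Nat.card_pos
    have := hlt (some r) hrT
    rw [dem_some] at this
    by_contra hr
    rw [if_neg hr] at this
    omega
  -- unique outside neighbor of each member of R'
  have huniq : ∀ r ∈ R', ∀ b₁ b₂ : Option V,
      (b₁ ∉ T ∧ (subdivide G u v).Adj (some r) b₁) →
      (b₂ ∉ T ∧ (subdivide G u v).Adj (some r) b₂) → b₁ = b₂ := by
    rintro r hr b₁ b₂ ⟨h1T, h1a⟩ ⟨h2T, h2a⟩
    by_contra hne
    have h2 : 1 < Nat.card {y : Option V // (subdivide G u v).Adj (some r) y ∧ y ∉ T} := by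
      rw [Nat.card_eq_fintype_card, Fintype.one_lt_card_iff_nontrivial]
      exact ⟨⟨b₁, h1a, h1T⟩, ⟨b₂, h2a, h2T⟩, fun hc => hne (by simpa using hc)⟩
    have h3 := hlt (some r) hr.1
    rw [dem_some, if_pos (hRR hr)] at h3
    omega
  -- every edge of E' has its T-endpoint of the form some r with r ∈ R'
  have hTend : ∀ a : Option V, a ∈ T → ∃ x : V, a = some x := by
    intro a ha
    match a with
    | none => exact absurd ha hnone
    | some x => exact ⟨x, rfl⟩
  -- the walk closure
  have hstep : ∀ a b : Option V, ((subdivide G u v).deleteEdges E').Adj a b →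
      a ∉ T → b ∉ T := by
    intro a b hab haT hbT
    rw [SimpleGraph.deleteEdges_adj] at hab
    exact hab.2 ⟨b, a, hbT, haT, hab.1.symm, Sym2.eq_swap⟩
  have hreach : ∀ w : Option V, ((subdivide G u v).deleteEdges E').Reachable none w → w ∉ T := by
    have key : ∀ (a b : Option V), ((subdivide G u v).deleteEdges E').Walk a b → a ∉ T → b ∉ T := by
      intro a b p
      induction p with
      | nil => exact id
      | cons h _ ih => exact fun ha => ih (hstep _ _ h ha)
    intro w hw
    obtain ⟨p⟩ := hw
    exact key none w p hnone
  -- the choice function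
  have hFex : ∀ r ∈ R', ∃ b : Option V, b ∉ T ∧ (subdivide G u v).Adj (some r) b :=
    fun r hr => hr.2
  set F : V → Sym2 (Option V) := fun r =>
    if h : ∃ b : Option V, b ∉ T ∧ (subdivide G u v).Adj (some r) b
    then s(some r, Classical.choose h) else s(some r, some r) with hFdef
  have hFspec : ∀ r ∈ R', ∃ b : Option V, b ∉ T ∧ (subdivide G u v).Adj (some r) b ∧
      F r = s(some r, b) := by
    intro r hr
    obtain h := hFex r hr
    refine ⟨Classical.choose h, (Classical.choose_spec h).1, (Classical.choose_spec h).2, ?_⟩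
    simp only [hFdef, dif_pos h]
  have himg : E' = F '' R' := by
    ext e
    constructor
    · rintro ⟨a, b, haT, hbT, hadj, rfl⟩
      obtain ⟨x, rfl⟩ := hTend a haT
      have hx : x ∈ R' := ⟨haT, b, hbT, hadj⟩
      obtain ⟨b₀, hb₀T, hb₀a, hFr⟩ := hFspec x hx
      have : b₀ = b := huniq x hx b₀ b ⟨hb₀T, hb₀a⟩ ⟨hbT, hadj⟩
      exact ⟨x, hx, by rw [hFr, this]⟩
    · rintro ⟨r, hr, rfl⟩
      obtain ⟨b₀, hb₀T, hb₀a, hFr⟩ := hFspec r hr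
      rw [hFr]
      exact ⟨some r, b₀, hr.1, hb₀T, hb₀a, rfl⟩
  have hinjF : Set.InjOn F R' := by
    intro r₁ h₁ r₂ h₂ hEq
    obtain ⟨b₁, hb₁T, hb₁a, hF₁⟩ := hFspec r₁ h₁
    obtain ⟨b₂, hb₂T, hb₂a, hF₂⟩ := hFspec r₂ h₂
    rw [hF₁, hF₂, Sym2.eq_iff] at hEq
    rcases hEq with ⟨h', -⟩ | ⟨h', -⟩
    · exact Option.some_injective V h'
    · exact absurd (h' ▸ h₁.1) hb₂T
  refine ⟨R', E', hRR, ?_, ?_, ?_, ?_, ?_, ?_⟩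
  · -- E' ⊆ edgeSet
    rintro e ⟨a, b, -, -, hadj, rfl⟩
    exact hadj
  · -- ncard
    rw [himg, Set.ncard_image_of_injOn hinjF]
  · -- not connected
    intro hconn
    obtain ⟨w₀, hw₀⟩ := hT
    exact hreach w₀ (hconn.preconnected none w₀) hw₀
  · -- ∀ e ∈ E', ∃! r
    rintro e ⟨a, b, haT, hbT, hadj, rfl⟩
    obtain ⟨x, rfl⟩ := hTend a haT
    refine ⟨x, ⟨⟨haT, b, hbT, hadj⟩, Sym2.mem_mk_left _ _⟩, ?_⟩
    rintro r₂ ⟨hr₂, hmem⟩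
    rw [Sym2.mem_iff] at hmem
    rcases hmem with h' | h'
    · exact Option.some_injective V h'
    · exact absurd (h' ▸ hr₂.1) hbT
  · -- ∀ r ∈ R', ∃! e
    intro r hr
    obtain ⟨b₀, hb₀T, hb₀a, hFr⟩ := hFspec r hr
    refine ⟨s(some r, b₀), ⟨⟨some r, b₀, hr.1, hb₀T, hb₀a, rfl⟩, Sym2.mem_mk_left _ _⟩, ?_⟩
    rintro e₂ ⟨⟨a, b, haT, hbT, hadj, rfl⟩, hmem⟩
    obtain ⟨x, rfl⟩ := hTend a haT
    rw [Sym2.mem_iff] at hmem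
    rcases hmem with h' | h'
    · have hrx : x = r := Option.some_injective V h'.symm
      subst hrx
      have : b = b₀ := huniq x hr b b₀ ⟨hbT, hadj⟩ ⟨hb₀T, hb₀a⟩
      rw [this]
    · exact absurd (h' ▸ hr.1) hbT
  · -- separation
    intro r hr hre
    exact hreach (some r) hre hr.1

lemma retcut_no_exit (hG : G.Connected) (he : G.Adj u v) {R' : Set V}
    {E' : Set (Sym2 (Option V))} (hcut : IsRetCut G u v R R' E') :
    ∃ T : Set (Option V), T.Nonempty ∧ ∀ w ∈ T,
      ¬ (dem R w ≤ Nat.card {y : Option V // (subdivide G u v).Adj w y ∧ y ∉ T}) := by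
  classical
  obtain ⟨hR'R, hE'sub, hncard, hnconn, huniqr, huniqe, hsep⟩ := hcut
  set T : Set (Option V) := {w | ¬ ((subdivide G u v).deleteEdges E').Reachable none w}
    with hTdef
  have hR'ne : R'.Nonempty := by
    by_contra h
    rw [Set.not_nonempty_iff_eq_empty] at h
    rw [h, Set.ncard_empty] at hncard
    have hE : E' = ∅ := (Set.ncard_eq_zero (Set.toFinite E')).1 hncard.symm
    rw [hE, SimpleGraph.deleteEdges_empty] at hnconn
    exact hnconn (subdivide_connected hG he)
  obtain ⟨r₀, hr₀⟩ := hR'ne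
  refine ⟨T, ⟨some r₀, hsep r₀ hr₀⟩, ?_⟩
  intro w hw
  have hwT : ¬ ((subdivide G u v).deleteEdges E').Reachable none w := hw
  have hwn : ∃ x : V, w = some x := by
    match w with
    | none => exact absurd (SimpleGraph.Reachable.refl none) hwT
    | some x => exact ⟨x, rfl⟩
  obtain ⟨x, rfl⟩ := hwn
  -- every outside neighbor yields a cut edge
  have hcutedge : ∀ y : Option V, y ∉ T → (subdivide G u v).Adj (some x) y →
      s((some x : Option V), y) ∈ E' := by
    intro y hy hadj
    by_contra hc
    have hry : ((subdivide G u v).deleteEdges E').Reachable none y := not_not.1 hy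
    have hadj' : ((subdivide G u v).deleteEdges E').Adj y (some x) := by
      rw [SimpleGraph.deleteEdges_adj]
      exact ⟨hadj.symm, by rwa [Sym2.eq_swap]⟩
    exact hwT (hry.trans hadj'.reachable)
  intro hle
  by_cases hxR' : x ∈ R'
  · -- x ∈ R' : at most one outside neighbor, but demand is 2
    have hsub : Subsingleton {y : Option V // (subdivide G u v).Adj (some x) y ∧ y ∉ T} := by
      constructor
      rintro ⟨y₁, h₁a, h₁T⟩ ⟨y₂, h₂a, h₂T⟩
      have he₁ := hcutedge y₁ h₁T h₁a
      have he₂ := hcutedge y₂ h₂T h₂a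
      obtain ⟨e, -, hu⟩ := huniqe x hxR'
      have h1 := hu s(some x, y₁) ⟨he₁, Sym2.mem_mk_left _ _⟩
      have h2 := hu s(some x, y₂) ⟨he₂, Sym2.mem_mk_left _ _⟩
      have : s((some x : Option V), y₁) = s((some x : Option V), y₂) := by rw [h1, h2]
      exact Subtype.ext (Sym2.congr_right.1 this)
    have hcard1 : Nat.card {y : Option V // (subdivide G u v).Adj (some x) y ∧ y ∉ T} ≤ 1 := by
      rw [Nat.card_eq_fintype_card]
      exact Fintype.card_le_one_iff_subsingleton.2 hsub
    rw [dem_some, if_pos (hR'R hxR')] at hle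
    omega
  · -- x ∉ R' : no outside neighbors at all, but demand ≥ 1
    have hempty : IsEmpty {y : Option V // (subdivide G u v).Adj (some x) y ∧ y ∉ T} := by
      constructor
      rintro ⟨y, hya, hyT⟩
      have hey := hcutedge y hyT hya
      obtain ⟨r, ⟨hrR', hrmem⟩, -⟩ := huniqr _ hey
      rw [Sym2.mem_iff] at hrmem
      rcases hrmem with h' | h'
      · exact hxR' ((Option.some_injective V h') ▸ hrR')
      · exact hyT (h' ▸ (hsep r hrR' : ¬ _))
    have hcard0 : Nat.card {y : Option V // (subdivide G u v).Adj (some x) y ∧ y ∉ T} = 0 :=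
      Nat.card_of_isEmpty
    rw [hcard0, dem_some] at hle
    by_cases hxR : x ∈ R
    · rw [if_pos hxR] at hle; omega
    · rw [if_neg hxR] at hle; omega

end CutLemmas
/-- Characterization: with `|R| = |E| − |V| + 1`, the triple `(N, e_ρ, R)` is
orientable iff it has no reticulation cut. -/
theorem orientable_iff_no_retcut {V X : Type} [Fintype V] [DecidableEq V]
    (G : SimpleGraph V) [DecidableRel G.Adj] (hnet : IsUndirBinNet G)
    (labels : X ≃ {w : V // G.degree w = 1})
    (u v : V) (he : G.Adj u v) (R : Set V)
    (hcard : R.ncard + Fintype.card V = G.edgeSet.ncard + 1) :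
    (∃ D : Option V → Option V → Prop, IsBinOrientation G u v R D) ↔
      ¬ ∃ (R' : Set V) (E' : Set (Sym2 (Option V))), IsRetCut G u v R R' E' := by
  classical
  constructor
  · rintro ⟨D, hD⟩ ⟨R', E', hcut⟩
    obtain ⟨T, hTne, hbad⟩ := retcut_no_exit hnet.1 he hcut
    obtain ⟨w, hwT, hgood⟩ := orientation_exit hD T hTne
    exact hbad w hwT hgood
  · intro hnocut
    have hC : ∀ T : Set (Option V), T.Nonempty →
        ∃ w ∈ T, dem R w ≤ Nat.card {y : Option V // (subdivide G u v).Adj w y ∧ y ∉ T} := by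
      intro T hT
      by_contra hc
      push_neg at hc
      exact hnocut (no_exit_retcut T hT (fun w hw => not_le.2 (hc w hw)))
    have hsum : ∑ w : Option V, dem R w = (subdivide G u v).edgeSet.ncard := by
      rw [dem_sum, subdivide_edgeSet_ncard he, hcard]
    obtain ⟨D, horient, hacyc, hdeg⟩ := exists_orientation (subdivide G u v) (dem R) hC hsum
    refine ⟨D, horient, hacyc, by rw [hdeg none, dem_none], ?_⟩
    intro w
    constructor
    · constructor
      · intro hw; rw [hdeg (some w), dem_some, if_pos hw]
      · intro h2
        by_contra hw
        rw [hdeg (some w), dem_some, if_neg hw] at h2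
        omega
    · intro hw; rw [hdeg (some w), dem_some, if_neg hw]
end

section
/- Let N = (V,E,X) be an undirected phylogenetic network with distinguished edge e_ρ and desired indegrees d⁻ with 1 ≤ d⁻(v) ≤ deg(v). If (N, e_ρ, d⁻) is orientable, then (N, e_ρ, d⁻) has no degree cut. -/
open Classical

/-- An undirected (not necessarily binary) phylogenetic network: a connected
graph with no degree-2 vertices. -/
def IsUndirNet {V : Type} [Fintype V] (G : SimpleGraph V) [DecidableRel G.Adj] : Prop :=
  G.Connected ∧ ∀ w : V, G.degree w ≠ 2

/-- An orientation of `(N, e_ρ, d⁻)`: an acyclic orientation of the graph obtained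
by subdividing the edge `{u,v}` with a root `ρ`, in which `ρ` has indegree `0`
(both its edges are directed outward) and every vertex `w` of `N` has indegree
exactly `d w`. -/
def IsDegOrientation {V : Type} (G : SimpleGraph V) (u v : V) (d : V → ℕ)
    (D : Option V → Option V → Prop) : Prop :=
  IsOrientationOf (subdivide G u v) D ∧ DigraphAcyclic D ∧ inDeg D none = 0 ∧
    ∀ w : V, inDeg D (some w) = d w

/-- A degree cut for `(G, {u,v}, d)`: a pair `(V', E')` where `E'` is an edge-cut of
the subdivided graph separating the root from every vertex of `V'`, each edge of
`E'` is incident to exactly one element of `V'`, and each `w ∈ V'` is incident to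
fewer than `d w` edges of `E'`. -/
def IsDegCut {V : Type} (G : SimpleGraph V) (u v : V) (d : V → ℕ)
    (V' : Set V) (E' : Set (Sym2 (Option V))) : Prop :=
  E' ⊆ (subdivide G u v).edgeSet ∧
  ¬ ((subdivide G u v).deleteEdges E').Connected ∧
  (∀ w ∈ V', ¬ ((subdivide G u v).deleteEdges E').Reachable none (some w)) ∧
  (∀ e ∈ E', ∃! w : V, w ∈ V' ∧ (some w : Option V) ∈ e) ∧
  (∀ w ∈ V', {e ∈ E' | (some w : Option V) ∈ e}.ncard < d w)

/-- If `(N, e_ρ, d⁻)` is orientable then `(N, e_ρ, d⁻)` has no degree cut. -/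
theorem no_degcut_of_orientable {V X : Type} [Fintype V] [DecidableEq V]
    (G : SimpleGraph V) [DecidableRel G.Adj] (hnet : IsUndirNet G)
    (labels : X ≃ {w : V // G.degree w = 1})
    (u v : V) (he : G.Adj u v) (d : V → ℕ)
    (hd : ∀ w : V, 1 ≤ d w ∧ d w ≤ G.degree w)
    (hor : ∃ D : Option V → Option V → Prop, IsDegOrientation G u v d D) :
    ¬ ∃ (V' : Set V) (E' : Set (Sym2 (Option V))), IsDegCut G u v d V' E' := by
  rintro ⟨V', E', hE'sub, hdisconn, hsep, huniq, hcard⟩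
  obtain ⟨D, ⟨hDadj, _⟩, hacyc, _, hindeg⟩ := hor
  set H := (subdivide G u v).deleteEdges E' with hH
  set A : Set (Option V) := {z | ¬ H.Reachable none z} with hA
  -- A is nonempty
  have hAne : A.Nonempty := by
    by_contra hcon
    rw [Set.not_nonempty_iff_eq_empty] at hcon
    apply hdisconn
    constructor
    intro x y
    have hx : ¬ x ∈ A := by rw [hcon]; exact Set.notMem_empty x
    have hy : ¬ y ∈ A := by rw [hcon]; exact Set.notMem_empty y
    simp only [hA, Set.mem_setOf_eq, not_not] at hx hy
    exact hx.symm.trans hy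
  -- pick a minimal element of A with respect to D
  haveI : IsTrans (Option V) (Relation.TransGen D) := ⟨fun _ _ _ => Relation.TransGen.trans⟩
  haveI : IsIrrefl (Option V) (Relation.TransGen D) := ⟨hacyc⟩
  obtain ⟨a, haA, hmin⟩ :=
    (Finite.wellFounded_of_trans_of_irrefl (Relation.TransGen D)).has_min A hAne
  -- a is not the root
  obtain ⟨w, rfl⟩ : ∃ w : V, a = some w := by
    match a, haA with
    | none, haA => exact absurd (SimpleGraph.Reachable.refl none) haA
    | some w, _ => exact ⟨w, rfl⟩
  -- every in-neighbour of w lies outside A and the connecting edge is in E'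
  have key : ∀ b : Option V, D b (some w) → b ∉ A ∧ s(b, some w) ∈ E' := by
    intro b hb
    have hbA : b ∉ A := fun hbA => hmin b hbA (Relation.TransGen.single hb)
    refine ⟨hbA, ?_⟩
    by_contra hnot
    apply haA
    have hreach : H.Reachable none b := not_not.mp hbA
    exact hreach.trans (SimpleGraph.Adj.reachable
      (by rw [hH, SimpleGraph.deleteEdges_adj]; exact ⟨hDadj b (some w) hb, hnot⟩))
  -- there is at least one in-neighbour of w
  have hpos : 0 < d w := (hd w).1
  have hcardS : Nat.card {b : Option V // D b (some w)} = d w := hindeg w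
  have hSne : Nonempty {b : Option V // D b (some w)} := by
    by_contra hcon
    haveI := not_nonempty_iff.mp hcon
    rw [Nat.card_of_isEmpty] at hcardS
    omega
  obtain ⟨b₀, hb₀⟩ := hSne
  -- w belongs to V'
  have hwV' : w ∈ V' := by
    obtain ⟨hb₀A, hb₀E⟩ := key b₀ hb₀
    obtain ⟨x, ⟨hxV', hxmem⟩, _⟩ := huniq _ hb₀E
    rcases Sym2.mem_iff.mp hxmem with hxb | hxw
    · exfalso
      exact (hxb ▸ hb₀A) (hsep x hxV')
    · exact (Option.some_injective V hxw) ▸ hxV'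
  -- the incident cut edges of w number at least d w
  have hinj : Function.Injective
      (fun b : {b : Option V // D b (some w)} =>
        (⟨s(b.1, some w), (key b.1 b.2).2, Sym2.mem_mk_right _ _⟩ :
          {e : Sym2 (Option V) // e ∈ {e ∈ E' | (some w : Option V) ∈ e}})) := by
    rintro ⟨b, hb⟩ ⟨b', hb'⟩ h
    simp only [Subtype.mk.injEq, Sym2.congr_left] at h
    exact Subtype.ext h
  have hle : d w ≤ {e ∈ E' | (some w : Option V) ∈ e}.ncard := by
    rw [← hcardS, ← Nat.card_coe_set_eq]
    exact Nat.card_le_card_of_injective _ hinj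
  exact absurd (hcard w hwV') (by omega)
end

section
/- Let N = (V,E,X) be an undirected phylogenetic network with distinguished edge e_ρ and desired indegrees d⁻ with 1 ≤ d⁻(v) ≤ deg(v). If (N, e_ρ, d⁻) has no degree cut and ∑_{v∈V} d⁻(v) = |E| + 1, then N − R is a forest, where R is the set of vertices v with d⁻(v) ≥ 2. -/
open Classical

section Aux

variable {V : Type}

@[simp] lemma subdivide_adj_some_some (G : SimpleGraph V) (u v a b : V) :
    (subdivide G u v).Adj (some a) (some b) ↔ G.Adj a b ∧ ¬ (s(a, b) = s(u, v)) := Iff.rfl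

@[simp] lemma subdivide_adj_some_none (G : SimpleGraph V) (u v a : V) :
    (subdivide G u v).Adj (some a) none ↔ (a = u ∨ a = v) := Iff.rfl

@[simp] lemma subdivide_adj_none_some (G : SimpleGraph V) (u v b : V) :
    (subdivide G u v).Adj none (some b) ↔ (b = u ∨ b = v) := Iff.rfl

/-- Key lemma: absence of a degree cut means every nonempty set of vertices
contains a vertex with at least `d w` edges leaving the set (in the subdivided
graph). -/
lemma peel_lemma [Fintype V] (G : SimpleGraph V) (u v : V) (d : V → ℕ)
    (hcut : ¬ ∃ (V' : Set V) (E' : Set (Sym2 (Option V))), IsDegCut G u v d V' E')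
    (A : Set V) (hA : A.Nonempty) :
    ∃ w ∈ A, d w ≤ {b : Option V | (subdivide G u v).Adj (some w) b ∧ b ∉ some '' A}.ncard := by
  by_contra hcon
  push_neg at hcon
  apply hcut
  set H := subdivide G u v with hH
  set E' : Set (Sym2 (Option V)) :=
    {e | ∃ a b, e = s(a, b) ∧ H.Adj a b ∧ a ∈ some '' A ∧ b ∉ some '' A} with hE'
  have hreach : ∀ w ∈ A, ¬ (H.deleteEdges E').Reachable none (some w) := by
    rintro w hw ⟨p⟩
    obtain ⟨dt, hdt, hfst, hsnd⟩ := p.exists_boundary_dart ((some '' A)ᶜ)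
      (by rintro ⟨x, _, hx⟩; cases hx)
      (fun hc => hc ⟨w, hw, rfl⟩)
    have hadj := dt.adj
    rw [SimpleGraph.deleteEdges_adj] at hadj
    exact hadj.2 ⟨dt.snd, dt.fst, Sym2.eq_swap, hadj.1.symm, not_not.mp hsnd, hfst⟩
  refine ⟨A, E', ?_, ?_, hreach, ?_, ?_⟩
  · rintro e ⟨a, b, rfl, hab, -, -⟩
    exact hab
  · obtain ⟨w₀, hw₀⟩ := hA
    intro hconn
    exact hreach w₀ hw₀ (hconn.preconnected none (some w₀))
  · rintro e ⟨a, b, rfl, hab, ⟨w, hwA, rfl⟩, hb⟩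
    refine ⟨w, ⟨hwA, Sym2.mem_mk_left _ _⟩, ?_⟩
    rintro w' ⟨hw'A, hw'e⟩
    rcases Sym2.mem_iff.mp hw'e with h | h
    · exact Option.some_injective _ h
    · exact absurd ⟨w', hw'A, h⟩ hb
  · intro w hw
    have hsub : {e ∈ E' | (some w : Option V) ∈ e} ⊆
        (fun b => s(some w, b)) '' {b : Option V | H.Adj (some w) b ∧ b ∉ some '' A} := by
      rintro e ⟨⟨a, b, rfl, hab, haA, hbA⟩, hwe⟩
      have ha : a = some w := by
        rcases Sym2.mem_iff.mp hwe with h | h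
        · exact h.symm
        · exact (hbA ⟨w, hw, h⟩).elim
      subst ha
      exact ⟨b, ⟨hab, hbA⟩, rfl⟩
    calc {e ∈ E' | (some w : Option V) ∈ e}.ncard
        ≤ ((fun b => s(some w, b)) ''
            {b : Option V | H.Adj (some w) b ∧ b ∉ some '' A}).ncard :=
          Set.ncard_le_ncard hsub (Set.toFinite _)
      _ = {b : Option V | H.Adj (some w) b ∧ b ∉ some '' A}.ncard :=
          Set.ncard_image_of_injective _ (fun b b' hbb => Sym2.congr_right.mp hbb)
      _ < d w := hcon w hw

variable [DecidableEq V]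

lemma idx_getElem {L : List V} (hnd : L.Nodup) {i : ℕ} (h : i < L.length) :
    L.idxOf L[i] = i := by
  have h2 : L.idxOf L[i] < L.length := List.idxOf_lt_length_iff.mpr (L.getElem_mem h)
  have := List.nodup_iff_injective_getElem.mp hnd
    (a₁ := ⟨L.idxOf L[i], h2⟩) (a₂ := ⟨i, h⟩)
    (by simpa using List.getElem_idxOf h2)
  exact congrArg Fin.val this

lemma not_mem_drop_of_idx_lt {L : List V} (hnd : L.Nodup) {z : V} {k : ℕ}
    (h : L.idxOf z < k) : z ∉ (L.drop k).toFinset := by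
  intro hz
  rw [List.mem_toFinset] at hz
  obtain ⟨i, hi, hzi⟩ := List.getElem_of_mem hz
  rw [List.getElem_drop] at hzi
  have hlen : k + i < L.length := by
    have : (L.drop k).length = L.length - k := List.length_drop
    omega
  have : L.idxOf z = k + i := by rw [← hzi]; exact idx_getElem hnd hlen
  omega

lemma idx_lt_of_not_mem_drop {L : List V} {z : V} {k : ℕ}
    (hz : z ∈ L) (h : z ∉ (L.drop k).toFinset) : L.idxOf z < k := by
  by_contra hge
  push_neg at hge
  apply h
  rw [List.mem_toFinset]
  have hlt : L.idxOf z < L.length := List.idxOf_lt_length_iff.mpr hz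
  refine List.mem_iff_getElem.mpr ⟨L.idxOf z - k, ?_, ?_⟩
  · rw [List.length_drop]; omega
  · have h3 : k + (L.idxOf z - k) = L.idxOf z := by omega
    simp only [List.getElem_drop, h3]
    exact List.getElem_idxOf hlt

/-- Build a "peeling order" of the vertices. -/
lemma exists_peel_order [Fintype V] (G : SimpleGraph V) (u v : V) (d : V → ℕ)
    (hcut : ¬ ∃ (V' : Set V) (E' : Set (Sym2 (Option V))), IsDegCut G u v d V' E') :
    ∀ A : Finset V, ∃ L : List V, L.Nodup ∧ L.toFinset = A ∧
      ∀ k : Fin L.length, d (L.get k) ≤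
        {b : Option V | (subdivide G u v).Adj (some (L.get k)) b ∧
          b ∉ some '' ((L.drop (k : ℕ)).toFinset : Set V)}.ncard := by
  intro A
  induction A using Finset.strongInduction with
  | _ A ih =>
    rcases eq_or_ne A ∅ with rfl | hne
    · exact ⟨[], List.nodup_nil, by simp, fun k => absurd k.2 (by simp)⟩
    · have hAne : ((A : Set V)).Nonempty := by
        obtain ⟨w, hw⟩ := Finset.nonempty_iff_ne_empty.mpr hne
        exact ⟨w, hw⟩
      obtain ⟨w, hwA, hwle⟩ := peel_lemma G u v d hcut A hAne
      have hwA' : w ∈ A := hwA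
      obtain ⟨L', hnd', hfs', hcond'⟩ := ih (A.erase w) (Finset.erase_ssubset hwA')
      have hts : (w :: L').toFinset = A := by
        rw [List.toFinset_cons, hfs', Finset.insert_erase hwA']
      refine ⟨w :: L', ?_, hts, ?_⟩
      · refine List.nodup_cons.mpr ⟨fun hmem => ?_, hnd'⟩
        have h1 : w ∈ A.erase w := hfs' ▸ List.mem_toFinset.mpr hmem
        simp at h1
      · rintro ⟨kk, hk⟩
        cases kk with
        | zero =>
          have hgoal : d w ≤
              {b : Option V | (subdivide G u v).Adj (some w) b ∧
                b ∉ some '' (((w :: L').toFinset : Finset V) : Set V)}.ncard := by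
            rw [hts]; exact hwle
          exact hgoal
        | succ kk =>
          have hk' : kk < L'.length := by simpa using hk
          exact hcond' ⟨kk, hk'⟩

/-- The total count: summing, over the peeling order, the number of edges to
earlier vertices is at most the number of edges of the subdivided graph. -/
lemma count_lemma [Fintype V] (G : SimpleGraph V) (u v : V) {L : List V} (hnd : L.Nodup)
    (hL : L.toFinset = Finset.univ) :
    ∑ k : Fin L.length,
        {b : Option V | (subdivide G u v).Adj (some (L.get k)) b ∧
          b ∉ some '' ((L.drop (k : ℕ)).toFinset : Set V)}.ncard
      ≤ (subdivide G u v).edgeSet.ncard := by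
  classical
  set H := subdivide G u v with hH
  set n := L.length with hn
  let rank : Option V → ℕ := fun o => o.elim 0 fun z => L.idxOf z + 1
  let f : Sym2 (Option V) → ℕ :=
    Sym2.lift ⟨fun a b => max (rank a) (rank b), fun a b => max_comm _ _⟩
  have hmemL : ∀ z : V, z ∈ L := fun z => by
    rw [← List.mem_toFinset, hL]; exact Finset.mem_univ z
  have hEfin : H.edgeSet.Finite := Set.toFinite _
  set EF : Finset (Sym2 (Option V)) := hEfin.toFinset with hEF
  have hcard : H.edgeSet.ncard = EF.card := Set.ncard_eq_toFinset_card _ hEfin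
  have stepA : ∀ k : Fin n,
      {b : Option V | H.Adj (some (L.get k)) b ∧
        b ∉ some '' ((L.drop (k : ℕ)).toFinset : Set V)}.ncard
      ≤ (EF.filter (fun e => f e = (k : ℕ) + 1)).card := by
    intro k
    have hSfin : ({b : Option V | H.Adj (some (L.get k)) b ∧
        b ∉ some '' ((L.drop (k : ℕ)).toFinset : Set V)}).Finite := Set.toFinite _
    rw [Set.ncard_eq_toFinset_card _ hSfin]
    apply Finset.card_le_card_of_injOn (fun b => s(some (L.get k), b))
    · intro b hb
      rw [Finset.mem_coe, Set.Finite.mem_toFinset] at hb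
      obtain ⟨hadj, hbmem⟩ := hb
      rw [Finset.mem_coe, Finset.mem_filter]
      refine ⟨hEfin.mem_toFinset.mpr hadj, ?_⟩
      have h1 : rank (some (L.get k)) = (k : ℕ) + 1 := by
        show L.idxOf (L.get k) + 1 = (k : ℕ) + 1
        rw [List.get_eq_getElem, idx_getElem hnd k.2]
      have h2 : rank b ≤ (k : ℕ) := by
        match b with
        | none => exact Nat.zero_le _
        | some z =>
          have hthis : z ∉ (L.drop (k : ℕ)).toFinset := fun hzd => hbmem ⟨z, hzd, rfl⟩
          have hlt := idx_lt_of_not_mem_drop (hmemL z) hthis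
          show L.idxOf z + 1 ≤ (k : ℕ)
          omega
      show max (rank (some (L.get k))) (rank b) = (k : ℕ) + 1
      rw [h1]
      exact max_eq_left (by omega)
    · intro b1 _ b2 _ hbb
      exact Sym2.congr_right.mp hbb
  have hbound : ∀ e ∈ EF, f e ∈ Finset.range (n + 1) := by
    intro e he
    rw [Finset.mem_range]
    induction e using Sym2.ind with
    | _ a b =>
      have hr : ∀ o : Option V, rank o ≤ n := by
        intro o
        match o with
        | none => exact Nat.zero_le _
        | some z =>
          have h1 := List.idxOf_lt_length_iff.mpr (hmemL z)
          show L.idxOf z + 1 ≤ n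
          omega
      have ha := hr a
      have hb := hr b
      show max (rank a) (rank b) < n + 1
      omega
  have htotal : EF.card = ∑ j ∈ Finset.range (n + 1), (EF.filter (fun e => f e = j)).card :=
    Finset.card_eq_sum_card_fiberwise hbound
  calc ∑ k : Fin n,
        {b : Option V | H.Adj (some (L.get k)) b ∧
          b ∉ some '' ((L.drop (k : ℕ)).toFinset : Set V)}.ncard
      ≤ ∑ k : Fin n, (EF.filter (fun e => f e = (k : ℕ) + 1)).card :=
        Finset.sum_le_sum fun k _ => stepA k
    _ = ∑ k ∈ Finset.range n, (EF.filter (fun e => f e = k + 1)).card :=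
        Fin.sum_univ_eq_sum_range (fun m => (EF.filter (fun e => f e = m + 1)).card) n
    _ ≤ EF.card := by
        rw [htotal, Finset.sum_range_succ']
        exact Nat.le_add_right _ _
    _ = H.edgeSet.ncard := hcard.symm

lemma subdivide_edge_bound [Fintype V] (G : SimpleGraph V) (u v : V) (he : G.Adj u v) :
    (subdivide G u v).edgeSet.ncard ≤ G.edgeSet.ncard + 1 := by
  classical
  set H := subdivide G u v with hH
  set ψ : Sym2 (Option V) → Sym2 (Option V) :=
    fun e => if e = s((none : Option V), some u) then s(some u, some v) else e with hψ
  have hnadj : ¬ H.Adj (some u) (some v) := fun h => h.2 rfl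
  have hinj : Set.InjOn ψ H.edgeSet := by
    intro e1 h1 e2 h2 heq
    by_cases h1' : e1 = s((none : Option V), some u) <;>
      by_cases h2' : e2 = s((none : Option V), some u)
    · rw [h1', h2']
    · exfalso
      simp only [hψ, h1', if_pos, if_neg h2', if_true] at heq
      rw [← heq, SimpleGraph.mem_edgeSet] at h2
      exact hnadj h2
    · exfalso
      simp only [hψ, h2', if_pos, if_neg h1', if_true] at heq
      rw [heq, SimpleGraph.mem_edgeSet] at h1
      exact hnadj h1
    · simpa [hψ, h1', h2'] using heq
  have himg : ψ '' H.edgeSet ⊆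
      (Sym2.map some '' G.edgeSet) ∪ {s((none : Option V), some v)} := by
    rintro _ ⟨e, heH, rfl⟩
    induction e using Sym2.ind with
    | _ a b =>
      by_cases hsp : s(a, b) = s((none : Option V), some u)
      · simp only [hψ, hsp, if_pos, if_true]
        exact Or.inl ⟨s(u, v), (SimpleGraph.mem_edgeSet G).mpr he, rfl⟩
      · simp only [hψ, if_neg hsp]
        rw [SimpleGraph.mem_edgeSet] at heH
        match a, b with
        | some a', some b' =>
          exact Or.inl ⟨s(a', b'), (SimpleGraph.mem_edgeSet G).mpr heH.1, rfl⟩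
        | some a', none =>
          rcases heH with rfl | rfl
          · exact absurd Sym2.eq_swap hsp
          · exact Or.inr (Set.mem_singleton_iff.mpr Sym2.eq_swap)
        | none, some b' =>
          rcases heH with rfl | rfl
          · exact absurd rfl hsp
          · exact Or.inr rfl
        | none, none => exact absurd heH (fun h => h)
  calc H.edgeSet.ncard = (ψ '' H.edgeSet).ncard := (Set.ncard_image_of_injOn hinj).symm
    _ ≤ ((Sym2.map some '' G.edgeSet) ∪ {s((none : Option V), some v)}).ncard :=
        Set.ncard_le_ncard himg (Set.toFinite _)
    _ ≤ (Sym2.map some '' G.edgeSet).ncard +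
        ({s((none : Option V), some v)} : Set (Sym2 (Option V))).ncard :=
        Set.ncard_union_le _ _
    _ = G.edgeSet.ncard + 1 := by
        rw [Set.ncard_image_of_injective _ (Sym2.map.injective (Option.some_injective V)),
          Set.ncard_singleton]

lemma cycle_exists_two_nbrs {W : Type} {G' : SimpleGraph W} {a : W} (q : G'.Walk a a)
    (hq : q.IsCycle) :
    ∃ x y : W, x ≠ y ∧ G'.Adj a x ∧ G'.Adj a y ∧ x ∈ q.support ∧ y ∈ q.support := by
  cases q with
  | nil => exact absurd rfl hq.ne_nil
  | @cons _ b _ h q' =>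
    have hab : a ≠ b := h.ne
    obtain ⟨c, hac, q'', hrev⟩ := SimpleGraph.Walk.exists_eq_cons_of_ne hab q'.reverse
    refine ⟨b, c, ?_, h, hac, ?_, ?_⟩
    · rintro rfl
      have hedge : s(a, b) ∈ q'.edges := by
        have h1 : s(a, b) ∈ q'.reverse.edges := by
          rw [hrev, SimpleGraph.Walk.edges_cons]
          exact List.mem_cons_self
        rwa [SimpleGraph.Walk.edges_reverse, List.mem_reverse] at h1
      have hnd := hq.edges_nodup
      rw [SimpleGraph.Walk.edges_cons] at hnd
      exact (List.nodup_cons.mp hnd).1 hedge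
    · rw [SimpleGraph.Walk.support_cons]
      exact List.mem_cons_of_mem _ q'.start_mem_support
    · rw [SimpleGraph.Walk.support_cons]
      apply List.mem_cons_of_mem
      have hc : c ∈ q'.reverse.support := by
        rw [hrev, SimpleGraph.Walk.support_cons]
        exact List.mem_cons_of_mem _ q''.start_mem_support
      rwa [SimpleGraph.Walk.support_reverse, List.mem_reverse] at hc

end Aux

/-- If `(N, e_ρ, d⁻)` has no degree cut and `∑ d⁻(v) = |E| + 1`, then `N − R` is a
forest, where `R = {v | d⁻(v) ≥ 2}`. -/
theorem forest_of_no_degcut {V X : Type} [Fintype V] [DecidableEq V]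
    (G : SimpleGraph V) [DecidableRel G.Adj] (hnet : IsUndirNet G)
    (labels : X ≃ {w : V // G.degree w = 1})
    (u v : V) (he : G.Adj u v) (d : V → ℕ)
    (hd : ∀ w : V, 1 ≤ d w ∧ d w ≤ G.degree w)
    (hcut : ¬ ∃ (V' : Set V) (E' : Set (Sym2 (Option V))), IsDegCut G u v d V' E')
    (hsum : ∑ w : V, d w = G.edgeSet.ncard + 1) :
    (G.induce {w : V | d w < 2}).IsAcyclic := by
  classical
  obtain ⟨L, hnd, hL, hcond⟩ := exists_peel_order G u v d hcut Finset.univ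
  have hmemL : ∀ z : V, z ∈ L := fun z => by
    rw [← List.mem_toFinset, hL]; exact Finset.mem_univ z
  -- the sum over the list equals the sum over all vertices
  have hbij : Function.Bijective (fun k : Fin L.length => L.get k) := by
    constructor
    · exact List.nodup_iff_injective_get.mp hnd
    · intro z
      obtain ⟨k, hk⟩ := List.get_of_mem (hmemL z)
      exact ⟨k, hk⟩
  have hsum1 : ∑ k : Fin L.length, d (L.get k) = ∑ w : V, d w :=
    Fintype.sum_bijective _ hbij _ _ (fun k => rfl)
  have hle1 : ∑ k : Fin L.length, d (L.get k) ≤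
      ∑ k : Fin L.length,
        {b : Option V | (subdivide G u v).Adj (some (L.get k)) b ∧
          b ∉ some '' ((L.drop (k : ℕ)).toFinset : Set V)}.ncard :=
    Finset.sum_le_sum fun k _ => hcond k
  have hle2 := count_lemma G u v hnd hL
  have hle3 := subdivide_edge_bound G u v he
  have heq : ∑ k : Fin L.length, d (L.get k) =
      ∑ k : Fin L.length,
        {b : Option V | (subdivide G u v).Adj (some (L.get k)) b ∧
          b ∉ some '' ((L.drop (k : ℕ)).toFinset : Set V)}.ncard := by
    omega
  have key : ∀ k : Fin L.length, d (L.get k) =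
      {b : Option V | (subdivide G u v).Adj (some (L.get k)) b ∧
        b ∉ some '' ((L.drop (k : ℕ)).toFinset : Set V)}.ncard :=
    fun k => (Finset.sum_eq_sum_iff_of_le (fun k _ => hcond k)).mp heq k (Finset.mem_univ k)
  have key' : ∀ (kk : ℕ) (hkk : kk < L.length), d (L.get ⟨kk, hkk⟩) =
      {b : Option V | (subdivide G u v).Adj (some (L.get ⟨kk, hkk⟩)) b ∧
        b ∉ some '' ((L.drop kk).toFinset : Set V)}.ncard :=
    fun kk hkk => key ⟨kk, hkk⟩
  -- now suppose there is a cycle among the vertices with `d w = 1`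
  intro a p hp
  have hsupne : p.support.toFinset.Nonempty :=
    ⟨a, List.mem_toFinset.mpr p.start_mem_support⟩
  obtain ⟨w, hwmem, hwmax⟩ :=
    p.support.toFinset.exists_max_image (fun z => L.idxOf (z : V)) hsupne
  rw [List.mem_toFinset] at hwmem
  have hqc : (p.rotate w hwmem).IsCycle := hp.rotate hwmem
  obtain ⟨x, y, hxy, hax, hay, hxs, hys⟩ := cycle_exists_two_nbrs (p.rotate w hwmem) hqc
  have hax' : G.Adj (w : V) (x : V) := hax
  have hay' : G.Adj (w : V) (y : V) := hay
  have hmem_p : ∀ z : {w : V | d w < 2}, z ∈ (p.rotate w hwmem).support → z ≠ w →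
      z ∈ p.support := by
    intro z hz hzw
    have hrot := SimpleGraph.Walk.support_rotate p w hwmem
    rw [SimpleGraph.Walk.support_eq_cons (p.rotate w hwmem), List.mem_cons] at hz
    rcases hz with hz | hz
    · exact absurd hz hzw
    · exact List.mem_of_mem_tail ((hrot.mem_iff).mp hz)
  have hidx : ∀ z : {w : V | d w < 2}, z ∈ (p.rotate w hwmem).support →
      G.Adj (w : V) (z : V) → L.idxOf (z : V) < L.idxOf (w : V) := by
    intro z hz hadj
    have hzw : z ≠ w := by
      rintro rfl
      exact hadj.ne rfl
    have hzp := hmem_p z hz hzw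
    have hle := hwmax z (List.mem_toFinset.mpr hzp)
    have hne : L.idxOf (z : V) ≠ L.idxOf (w : V) := by
      intro hidxeq
      apply hadj.ne
      have h1 := List.getElem_idxOf (List.idxOf_lt_length_iff.mpr (hmemL (z : V)))
      have h2 := List.getElem_idxOf (List.idxOf_lt_length_iff.mpr (hmemL (w : V)))
      rw [← h1, ← h2]
      congr 1
      omega
    omega
  have hklt : L.idxOf (w : V) < L.length := List.idxOf_lt_length_iff.mpr (hmemL _)
  have hgetk : L.get ⟨L.idxOf (w : V), hklt⟩ = (w : V) := List.idxOf_get hklt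
  have hdw : d (w : V) = 1 := by
    have h2 : d (w : V) < 2 := w.2
    have h1 := (hd (w : V)).1
    omega
  have hkey := key' (L.idxOf (w : V)) hklt
  rw [hgetk, hdw] at hkey
  -- two distinct elements of the set whose cardinality is 1
  have hmemS : ∀ z : V, G.Adj (w : V) z → L.idxOf z < L.idxOf (w : V) →
      (if s((w : V), z) = s(u, v) then (none : Option V) else some z) ∈
        {b : Option V | (subdivide G u v).Adj (some (w : V)) b ∧
          b ∉ some '' (((L.drop (L.idxOf (w : V))).toFinset : Finset V) : Set V)} := by
    intro z hadj hlt
    by_cases hsp : s((w : V), z) = s(u, v)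
    · rw [if_pos hsp]
      constructor
      · rw [subdivide_adj_some_none]
        rcases Sym2.eq_iff.mp hsp with ⟨h1, _⟩ | ⟨h1, _⟩
        · exact Or.inl h1
        · exact Or.inr h1
      · rintro ⟨z', _, hz'⟩
        cases hz'
    · rw [if_neg hsp]
      refine ⟨⟨hadj, hsp⟩, ?_⟩
      rintro ⟨z', hz', hz'e⟩
      obtain rfl : z' = z := Option.some_injective _ hz'e
      exact not_mem_drop_of_idx_lt hnd hlt hz'
  have hx1 := hmemS (x : V) hax' (hidx x hxs hax')
  have hy1 := hmemS (y : V) hay' (hidx y hys hay')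
  have hne2 : (if s((w : V), (x : V)) = s(u, v) then (none : Option V) else some (x : V)) ≠
      (if s((w : V), (y : V)) = s(u, v) then (none : Option V) else some (y : V)) := by
    by_cases h1 : s((w : V), (x : V)) = s(u, v) <;>
      by_cases h2 : s((w : V), (y : V)) = s(u, v)
    · exfalso
      exact hxy (Subtype.ext (Sym2.congr_right.mp (h1.trans h2.symm)))
    · simp only [if_pos h1, if_neg h2]
      exact fun hc => by cases hc
    · simp only [if_neg h1, if_pos h2]
      exact fun hc => by cases hc
    · simp only [if_neg h1, if_neg h2]
      intro hc
      exact hxy (Subtype.ext (Option.some_injective _ hc))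
  have h2lt : 1 <
      {b : Option V | (subdivide G u v).Adj (some (w : V)) b ∧
        b ∉ some '' (((L.drop (L.idxOf (w : V))).toFinset : Finset V) : Set V)}.ncard :=
    (Set.one_lt_ncard_iff (Set.toFinite _)).mpr ⟨_, _, hx1, hy1, hne2⟩
  omega
end

section
/- Let N = (V,E,X) be an undirected binary phylogenetic network, e_ρ ∈ E, and R ⊆ V with |R| = |E| − |V| + 1. Then (N, e_ρ, R) is stack-free orientable if and only if (N, e_ρ, R) has no reticulation cut and R is an independent set of N. -/
open Classical

/-- A stack-free orientation: an orientation in which no reticulation has a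
reticulation as a child. -/
def IsStackFreeOrientation {V : Type} [Fintype V] (G : SimpleGraph V) (u v : V)
    (R : Set V) (D : Option V → Option V → Prop) : Prop :=
  IsBinOrientation G u v R D ∧
    ∀ a b : V, D (some a) (some b) → a ∈ R → b ∉ R

section AuxBasic
variable {W : Type}

lemma inDeg_eq_card [Fintype W] (D : W → W → Prop) (b : W) :
    inDeg D b = (Finset.univ.filter (fun a => D a b)).card := by
  rw [inDeg, Nat.card_eq_fintype_card]
  exact Fintype.card_subtype _

lemma exists_arc_of_inDeg_pos [Fintype W] {D : W → W → Prop} {b : W}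
    (h : inDeg D b ≠ 0) : ∃ a, D a b := by
  rw [inDeg_eq_card] at h
  obtain ⟨a, ha⟩ := Finset.card_pos.mp (Nat.pos_of_ne_zero h)
  exact ⟨a, (Finset.mem_filter.mp ha).2⟩

lemma exists_other_arc [Fintype W] {D : W → W → Prop} {b : W} {a : W}
    (h2 : inDeg D b = 2) (ha : D a b) : ∃ a', a' ≠ a ∧ D a' b := by
  rw [inDeg_eq_card] at h2
  have hmem : a ∈ Finset.univ.filter (fun x => D x b) := by simp [ha]
  have hne : ((Finset.univ.filter (fun x => D x b)).erase a).Nonempty := by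
    rw [← Finset.card_pos, Finset.card_erase_of_mem hmem, h2]; norm_num
  obtain ⟨a', ha'⟩ := hne
  exact ⟨a', (Finset.mem_erase.mp ha').1,
    (Finset.mem_filter.mp (Finset.mem_erase.mp ha').2).2⟩

lemma exists_min_of_acyclic [Finite W] {D : W → W → Prop} (hac : DigraphAcyclic D)
    {B : Set W} (hB : B.Nonempty) : ∃ b ∈ B, ∀ x ∈ B, ¬ D x b := by
  have ht : IsTrans W (Relation.TransGen D) := ⟨fun _ _ _ => Relation.TransGen.trans⟩
  have hi : IsIrrefl W (Relation.TransGen D) := ⟨hac⟩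
  obtain ⟨b, hbB, hmin⟩ :=
    (Finite.wellFounded_of_trans_of_irrefl (Relation.TransGen D)).has_min B hB
  exact ⟨b, hbB, fun x hx hD => hmin x hx (Relation.TransGen.single hD)⟩

lemma noMinCycle [Finite W] {D : W → W → Prop} (hac : DigraphAcyclic D)
    {B : Set W} (hB : B.Nonempty) (hstep : ∀ b ∈ B, ∃ x ∈ B, D x b) : False := by
  obtain ⟨b, hbB, hmin⟩ := exists_min_of_acyclic hac hB
  obtain ⟨x, hxB, hxb⟩ := hstep b hbB
  exact hmin x hxB hxb

end AuxBasic

section Forward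
variable {V : Type} [Fintype V] [DecidableEq V]

lemma subdiv_adj_ss {G : SimpleGraph V} {u v a b : V} :
    (subdivide G u v).Adj (some a) (some b) ↔ G.Adj a b ∧ ¬ (s(a,b) = s(u,v)) := Iff.rfl

lemma subdiv_adj_ns {G : SimpleGraph V} {u v : V} {b : V} :
    (subdivide G u v).Adj none (some b) ↔ (b = u ∨ b = v) := Iff.rfl

lemma subdiv_adj_sn {G : SimpleGraph V} {u v : V} {a : V} :
    (subdivide G u v).Adj (some a) none ↔ (a = u ∨ a = v) := Iff.rfl

lemma indep_of_orientation {G : SimpleGraph V} {u v : V} {R : Set V}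
    {D : Option V → Option V → Prop} (hD : IsStackFreeOrientation G u v R D) :
    ∀ a ∈ R, ∀ b ∈ R, ¬ G.Adj a b := by
  obtain ⟨⟨⟨harc, hone⟩, hac, hroot, hdeg⟩, hsf⟩ := hD
  intro a ha b hb hadj
  by_cases hsuv : s(a,b) = s(u,v)
  · -- then u, v ∈ R; derive a contradiction from acyclicity
    have huvR : u ∈ R ∧ v ∈ R := by
      rcases Sym2.eq_iff.mp hsuv with ⟨rfl, rfl⟩ | ⟨rfl, rfl⟩
      exacts [⟨ha, hb⟩, ⟨hb, ha⟩]
    refine noMinCycle hac (B := {x : Option V | x ≠ none}) ⟨some u, by simp⟩ ?_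
    intro x hx
    match x, hx with
    | some w, _ =>
      have hindeg : inDeg D (some w) = 1 ∨ inDeg D (some w) = 2 := by
        by_cases hw : w ∈ R
        · exact Or.inr ((hdeg w).1.mp hw)
        · exact Or.inl ((hdeg w).2 hw)
      have hpos : inDeg D (some w) ≠ 0 := by rcases hindeg with h | h <;> omega
      obtain ⟨x₀, hx₀⟩ := exists_arc_of_inDeg_pos hpos
      by_cases hx0n : x₀ = none
      · subst hx0n
        have hwuv : w = u ∨ w = v := (subdiv_adj_ns).mp (harc _ _ hx₀)
        have hwR : w ∈ R := by rcases hwuv with rfl | rfl; exacts [huvR.1, huvR.2]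
        obtain ⟨x₁, hx₁ne, hx₁⟩ := exists_other_arc ((hdeg w).1.mp hwR) hx₀
        exact ⟨x₁, hx₁ne, hx₁⟩
      · exact ⟨x₀, hx0n, hx₀⟩
  · have hadjH : (subdivide G u v).Adj (some a) (some b) := ⟨hadj, hsuv⟩
    by_cases hd : D (some a) (some b)
    · exact hsf a b hd ha hb
    · have hd' : D (some b) (some a) := by
        have := (hone _ _ hadjH.symm)
        rw [this]
        intro h; exact hd h
      exact hsf b a hd' hb ha

lemma no_retcut_of_orientation {G : SimpleGraph V} {u v : V} {R : Set V}
    {D : Option V → Option V → Prop} (hD : IsBinOrientation G u v R D) :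
    ¬ ∃ (R' : Set V) (E' : Set (Sym2 (Option V))), IsRetCut G u v R R' E' := by
  obtain ⟨⟨harc, hone⟩, hac, hroot, hdeg⟩ := hD
  rintro ⟨R', E', hR'R, hE'sub, hcard, hNC, hEr, hrE, hsep⟩
  set H' := (subdivide G u v).deleteEdges E' with hH'
  set B : Set (Option V) := {x | ¬ H'.Reachable none x} with hB
  have hBne : B.Nonempty := by
    by_contra hBe
    rw [Set.not_nonempty_iff_eq_empty] at hBe
    refine hNC ⟨fun x y => ?_⟩
    have hreach : ∀ z, H'.Reachable none z := by
      intro z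
      by_contra h
      have : z ∈ B := h
      rw [hBe] at this
      exact this
    exact (hreach x).symm.trans (hreach y)
  obtain ⟨b, hbB, hmin⟩ := exists_min_of_acyclic hac hBne
  have hbnone : b ≠ none := by
    rintro rfl; exact hbB (SimpleGraph.Reachable.refl none)
  obtain ⟨w, rfl⟩ : ∃ w, b = some w := by
    cases b with
    | none => exact absurd rfl hbnone
    | some w => exact ⟨w, rfl⟩
  have hindeg : inDeg D (some w) = 1 ∨ inDeg D (some w) = 2 := by
    by_cases hw : w ∈ R
    · exact Or.inr ((hdeg w).1.mp hw)
    · exact Or.inl ((hdeg w).2 hw)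
  have hpos : inDeg D (some w) ≠ 0 := by rcases hindeg with h | h <;> omega
  obtain ⟨a, haD⟩ := exists_arc_of_inDeg_pos hpos
  have haA : H'.Reachable none a := by
    by_contra h; exact hmin a h haD
  have hkey : ∀ a', D a' (some w) → H'.Reachable none a' → s(a', some w) ∈ E' := by
    intro a' hD' hra'
    by_contra hne
    have hadj' : H'.Adj a' (some w) := by
      rw [hH', SimpleGraph.deleteEdges_adj]
      exact ⟨harc _ _ hD', hne⟩
    exact hbB (hra'.trans hadj'.reachable)
  have he₁ : s(a, some w) ∈ E' := hkey a haD haA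
  obtain ⟨r, ⟨hrR', hrmem⟩, -⟩ := hEr _ he₁
  rcases Sym2.mem_iff.mp hrmem with hra | hrw
  · exact hsep r hrR' (hra ▸ haA)
  · have hww : w = r := (Option.some_injective V hrw).symm
    subst hww
    have h2 : inDeg D (some w) = 2 := (hdeg w).1.mp (hR'R hrR')
    obtain ⟨a', hane, ha'D⟩ := exists_other_arc h2 haD
    have ha'A : H'.Reachable none a' := by
      by_contra h; exact hmin a' h ha'D
    have he₂ : s(a', some w) ∈ E' := hkey a' ha'D ha'A
    obtain ⟨e₀, -, huniq⟩ := hrE w hrR'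
    have h1 := huniq _ ⟨he₁, Sym2.mem_mk_right a (some w)⟩
    have h2' := huniq _ ⟨he₂, Sym2.mem_mk_right a' (some w)⟩
    have heq : s(a, some w) = s(a', some w) := h1.trans h2'.symm
    rcases Sym2.eq_iff.mp heq with ⟨h3, -⟩ | ⟨h3, h4⟩
    · exact hane h3.symm
    · exact (harc _ _ haD).ne h3

end Forward

section Backward
variable {V : Type} [Fintype V] [DecidableEq V]

/-- Bootstrap activation process: `none` starts active; a non-reticulation becomes
active when one neighbor is active, a reticulation when two are. -/
def SAct (G : SimpleGraph V) (u v : V) (R : Set V) : ℕ → Set (Option V)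
  | 0 => {none}
  | n+1 => SAct G u v R n ∪ {z | ∃ w : V, z = some w ∧
      ((w ∉ R ∧ ∃ x, (subdivide G u v).Adj x z ∧ x ∈ SAct G u v R n) ∨
       (w ∈ R ∧ ∃ x y, x ≠ y ∧ (subdivide G u v).Adj x z ∧ (subdivide G u v).Adj y z ∧
         x ∈ SAct G u v R n ∧ y ∈ SAct G u v R n))}

def ActV (G : SimpleGraph V) (u v : V) (R : Set V) (z : Option V) : Prop :=
  ∃ n, z ∈ SAct G u v R n

variable {G : SimpleGraph V} {u v : V} {R : Set V}

lemma SAct_mono {m n : ℕ} (h : m ≤ n) : SAct G u v R m ⊆ SAct G u v R n := by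
  induction n with
  | zero => rw [Nat.le_zero.mp h]
  | succ k ih =>
    rcases Nat.lt_or_ge m (k+1) with h' | h'
    · exact (ih (Nat.lt_succ_iff.mp h')).trans Set.subset_union_left
    · rw [Nat.le_antisymm h h']

lemma act_none : ActV G u v R none := ⟨0, rfl⟩

lemma act_step1 {w : V} {x : Option V} (hw : w ∉ R)
    (hx : (subdivide G u v).Adj x (some w)) (hax : ActV G u v R x) :
    ActV G u v R (some w) := by
  obtain ⟨n, hn⟩ := hax
  exact ⟨n+1, Or.inr ⟨w, rfl, Or.inl ⟨hw, x, hx, hn⟩⟩⟩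

lemma act_step2 {w : V} {x y : Option V} (hw : w ∈ R) (hxy : x ≠ y)
    (hx : (subdivide G u v).Adj x (some w)) (hy : (subdivide G u v).Adj y (some w))
    (hax : ActV G u v R x) (hay : ActV G u v R y) : ActV G u v R (some w) := by
  obtain ⟨n, hn⟩ := hax
  obtain ⟨m, hm⟩ := hay
  exact ⟨max n m + 1, Or.inr ⟨w, rfl, Or.inr ⟨hw, x, y, hxy, hx, hy,
    SAct_mono (le_max_left n m) hn, SAct_mono (le_max_right n m) hm⟩⟩⟩

lemma retcut_of_stall (hstall : ∃ z, ¬ ActV G u v R z) :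
    ∃ (R' : Set V) (E' : Set (Sym2 (Option V))), IsRetCut G u v R R' E' := by
  set H := subdivide G u v with hH
  set E' : Set (Sym2 (Option V)) :=
    {e | ∃ x y, e = s(x,y) ∧ H.Adj x y ∧ ActV G u v R x ∧ ¬ ActV G u v R y} with hE'
  set R' : Set V :=
    {r | r ∈ R ∧ ¬ ActV G u v R (some r) ∧ ∃ x, H.Adj x (some r) ∧ ActV G u v R x} with hR'
  -- classification of the inactive endpoint of a cross edge
  have hclass : ∀ x y, H.Adj x y → ActV G u v R x → ¬ ActV G u v R y →
      ∃ r : V, y = some r ∧ r ∈ R ∧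
        (∀ x', H.Adj x' y → ActV G u v R x' → x' = x) := by
    intro x y hxy hax hny
    cases y with
    | none => exact absurd act_none hny
    | some w =>
      by_cases hw : w ∈ R
      · refine ⟨w, rfl, hw, ?_⟩
        intro x' hx' hax'
        by_contra hne
        exact hny (act_step2 hw hne hx' hxy hax' hax)
      · exact absurd (act_step1 hw hxy hax) hny
  -- the assignment of a reticulation to each cross edge
  set g : Sym2 (Option V) → V := fun e =>
    if h : ∃ r : V, ¬ ActV G u v R (some r) ∧ (some r : Option V) ∈ e then h.choose else u
    with hg
  have hgr : ∀ (x : Option V) (r : V), ActV G u v R x → ¬ ActV G u v R (some r) →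
      g s(x, some r) = r := by
    intro x r hax hnr
    have hpred : ∃ r' : V, ¬ ActV G u v R (some r') ∧ (some r' : Option V) ∈ s(x, some r) :=
      ⟨r, hnr, Sym2.mem_mk_right _ _⟩
    rw [hg]
    simp only [dif_pos hpred]
    obtain ⟨hc1, hc2⟩ := hpred.choose_spec
    rcases Sym2.mem_iff.mp hc2 with h | h
    · exact absurd (show ActV G u v R (some hpred.choose) by rw [h]; exact hax) hc1
    · exact Option.some_injective V h
  -- full description of cross edges
  have hEmem : ∀ e ∈ E', ∃ (x : Option V) (r : V), e = s(x, some r) ∧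
      H.Adj x (some r) ∧ ActV G u v R x ∧ ¬ ActV G u v R (some r) ∧ r ∈ R' ∧ g e = r ∧
      (∀ x', H.Adj x' (some r) → ActV G u v R x' → x' = x) := by
    rintro e ⟨x, y, rfl, hxy, hax, hny⟩
    obtain ⟨r, rfl, hrR, huniq⟩ := hclass x y hxy hax hny
    exact ⟨x, r, rfl, hxy, hax, hny, ⟨hrR, hny, x, hxy, hax⟩, hgr x r hax hny, huniq⟩
  have himg : R' = g '' E' := by
    apply Set.eq_of_subset_of_subset
    · rintro r ⟨hrR, hnr, x, hxr, hax⟩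
      refine ⟨s(x, some r), ⟨x, some r, rfl, hxr, hax, hnr⟩, hgr x r hax hnr⟩
    · rintro r ⟨e, heE, rfl⟩
      obtain ⟨x, r', rfl, hxy, hax, hnr, hrR', hge, -⟩ := hEmem _ heE
      rw [hge]; exact hrR'
  have hinj : Set.InjOn g E' := by
    intro e₁ h₁ e₂ h₂ hge
    obtain ⟨x₁, r₁, rfl, hadj₁, hax₁, hnr₁, -, hg₁, -⟩ := hEmem _ h₁
    obtain ⟨x₂, r₂, rfl, hadj₂, hax₂, hnr₂, -, hg₂, huniq₂⟩ := hEmem _ h₂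
    have hr : r₁ = r₂ := by rw [← hg₁, hge, hg₂]
    subst hr
    rw [huniq₂ x₁ hadj₁ hax₁]
  -- reachability in the cut graph preserves activity
  have hwalk : ∀ x y : Option V, (H.deleteEdges E').Reachable x y →
      ActV G u v R x → ActV G u v R y := by
    intro x y hr
    obtain ⟨p⟩ := hr
    induction p with
    | nil => exact fun h => h
    | cons hadj p ih =>
      intro hax
      rw [SimpleGraph.deleteEdges_adj] at hadj
      refine ih ?_
      by_contra hm
      exact hadj.2 ⟨_, _, rfl, hadj.1, hax, hm⟩
  obtain ⟨z, hz⟩ := hstall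
  refine ⟨R', E', fun r hr => hr.1, ?_, ?_, ?_, ?_, ?_, ?_⟩
  · rintro e ⟨x, y, rfl, hxy, -, -⟩
    exact hxy
  · rw [himg, Set.ncard_image_of_injOn hinj]
  · intro hC
    exact hz (hwalk none z (hC.preconnected none z) act_none)
  · intro e heE
    obtain ⟨x, r, rfl, hadj, hax, hnr, hrR', -, -⟩ := hEmem _ heE
    refine ⟨r, ⟨hrR', Sym2.mem_mk_right _ _⟩, ?_⟩
    rintro r'' ⟨hr''R', hmem⟩
    rcases Sym2.mem_iff.mp hmem with h | h
    · exact absurd (show ActV G u v R (some r'') by rw [h]; exact hax)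
        (by rw [hR'] at hr''R'; exact hr''R'.2.1)
    · exact Option.some_injective V h
  · intro r hrR'
    obtain ⟨hrR, hnr, x, hxr, hax⟩ := hrR'
    refine ⟨s(x, some r), ⟨⟨x, some r, rfl, hxr, hax, hnr⟩, Sym2.mem_mk_right _ _⟩, ?_⟩
    rintro e' ⟨he'E, hmem⟩
    obtain ⟨x', r', rfl, hadj', hax', hnr', -, -, huniq'⟩ := hEmem _ he'E
    rcases Sym2.mem_iff.mp hmem with h | h
    · exact absurd (show ActV G u v R (some r) by rw [h]; exact hax') hnr
    · have : r = r' := Option.some_injective V h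
      subst this
      rw [huniq' x hxr hax]
  · intro r hrR' hreach
    exact hrR'.2.1 (hwalk none (some r) hreach act_none)

end Backward

section Counting

lemma sum_inDeg {W : Type} [Fintype W] {H : SimpleGraph W} {D : W → W → Prop}
    (hD : IsOrientationOf H D) :
    ∑ z : W, inDeg D z = H.edgeSet.ncard := by
  classical
  obtain ⟨harc, hone⟩ := hD
  have hfin : H.edgeSet.Finite := Set.toFinite _
  rw [Set.ncard_eq_toFinset_card _ hfin]
  set AS : Finset (W × W) := Finset.univ.filter (fun p => D p.1 p.2) with hAS
  have h1 : AS.card = ∑ z : W, inDeg D z := by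
    rw [Finset.card_eq_sum_card_fiberwise (f := fun p : W × W => p.2) (t := Finset.univ)
      (fun x _ => Finset.mem_univ _)]
    refine Finset.sum_congr rfl fun z _ => ?_
    rw [inDeg_eq_card]
    refine Finset.card_bij' (fun p _ => p.1) (fun a _ => (a, z)) ?_ ?_ ?_ ?_
    · intro p hp
      simp only [hAS, Finset.mem_filter, Finset.mem_univ, true_and] at hp ⊢
      rw [← hp.2]
      exact hp.1
    · intro a ha
      simp only [hAS, Finset.mem_filter, Finset.mem_univ, true_and] at ha ⊢
      exact ⟨ha, trivial⟩
    · intro p hp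
      simp only [hAS, Finset.mem_filter, Finset.mem_univ, true_and] at hp
      exact Prod.ext rfl hp.2.symm
    · intro a _
      rfl
  have h2 : AS.card = hfin.toFinset.card := by
    refine Finset.card_bij (fun p _ => s(p.1, p.2)) ?_ ?_ ?_
    · intro p hp
      rw [Set.Finite.mem_toFinset]
      exact harc _ _ (by simpa [hAS] using hp)
    · intro p hp q hq heq
      have hp' : D p.1 p.2 := by simpa [hAS] using hp
      have hq' : D q.1 q.2 := by simpa [hAS] using hq
      rcases Sym2.eq_iff.mp heq with ⟨h1', h2'⟩ | ⟨h1', h2'⟩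
      · exact Prod.ext h1' h2'
      · exfalso
        have hqp : D q.2 q.1 := by rw [← h1', ← h2']; exact hp'
        exact (hone _ _ (harc _ _ hq')).mp hq' hqp
    · intro e he
      rw [Set.Finite.mem_toFinset] at he
      induction e using Sym2.ind with
      | _ x y =>
        rw [SimpleGraph.mem_edgeSet] at he
        by_cases hxy : D x y
        · exact ⟨(x, y), by simp [hAS, hxy], rfl⟩
        · have hyx : D y x := by
            by_contra h
            exact hxy ((hone x y he).mpr h)
          exact ⟨(y, x), by simp [hAS, hyx], Sym2.eq_swap⟩
  rw [← h1]
  exact h2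

variable {V : Type} [Fintype V] [DecidableEq V]

lemma edgeSet_subdivide (G : SimpleGraph V) (u v : V) :
    (subdivide G u v).edgeSet =
      (Sym2.map some '' (G.edgeSet \ {s(u,v)})) ∪
        {s((none : Option V), some u), s((none : Option V), some v)} := by
  have himg : ∀ x y : Option V, (s(x,y) ∈ Sym2.map some '' (G.edgeSet \ {s(u,v)})) ↔
      ∃ a b : V, x = some a ∧ y = some b ∧ G.Adj a b ∧ ¬ (s(a,b) = s(u,v)) := by
    intro x y
    constructor
    · rintro ⟨e₀, ⟨he₀, hne⟩, hmap⟩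
      induction e₀ using Sym2.ind with
      | _ p q =>
        rw [Sym2.map_pair_eq] at hmap
        rw [SimpleGraph.mem_edgeSet] at he₀
        rw [Set.mem_singleton_iff] at hne
        rcases Sym2.eq_iff.mp hmap with ⟨h1, h2⟩ | ⟨h1, h2⟩
        · exact ⟨p, q, h1.symm, h2.symm, he₀, hne⟩
        · refine ⟨q, p, h2.symm, h1.symm, he₀.symm, ?_⟩
          rw [Sym2.eq_swap]
          exact hne
    · rintro ⟨a, b, rfl, rfl, hadj, hne⟩
      refine ⟨s(a,b), ⟨?_, hne⟩, Sym2.map_pair_eq some a b⟩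
      rw [SimpleGraph.mem_edgeSet]
      exact hadj
  ext e
  induction e using Sym2.ind with
  | _ x y =>
    rw [SimpleGraph.mem_edgeSet]
    simp only [Set.mem_union, Set.mem_insert_iff, Set.mem_singleton_iff, himg, Sym2.eq_iff]
    cases x with
    | none =>
      cases y with
      | none =>
        constructor
        · intro h
          exact (show False from h).elim
        · rintro (⟨a, b, h, -⟩ | (⟨-, h⟩ | ⟨h, -⟩) | (⟨-, h⟩ | ⟨h, -⟩)) <;>
            exact absurd h.symm (Option.some_ne_none _)
      | some b =>
        rw [subdiv_adj_ns]
        constructor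
        · rintro (rfl | rfl)
          · exact Or.inr (Or.inl (Or.inl ⟨rfl, rfl⟩))
          · exact Or.inr (Or.inr (Or.inl ⟨rfl, rfl⟩))
        · rintro (⟨a, b', h, -⟩ | (⟨-, h⟩ | ⟨h, -⟩) | (⟨-, h⟩ | ⟨h, -⟩))
          · exact absurd h.symm (Option.some_ne_none _)
          · exact Or.inl (Option.some_injective V h)
          · exact absurd h.symm (Option.some_ne_none _)
          · exact Or.inr (Option.some_injective V h)
          · exact absurd h.symm (Option.some_ne_none _)
    | some a =>
      cases y with
      | none =>
        rw [subdiv_adj_sn]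
        constructor
        · rintro (rfl | rfl)
          · exact Or.inr (Or.inl (Or.inr ⟨rfl, rfl⟩))
          · exact Or.inr (Or.inr (Or.inr ⟨rfl, rfl⟩))
        · rintro (⟨a', b', -, h, -⟩ | (⟨h, -⟩ | ⟨h, -⟩) | (⟨h, -⟩ | ⟨h, -⟩))
          · exact absurd h.symm (Option.some_ne_none _)
          · exact absurd h (Option.some_ne_none _)
          · exact Or.inl (Option.some_injective V h)
          · exact absurd h (Option.some_ne_none _)
          · exact Or.inr (Option.some_injective V h)
      | some b =>
        rw [subdiv_adj_ss]
        constructor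
        · rintro ⟨hadj, hne⟩
          exact Or.inl ⟨a, b, rfl, rfl, hadj, fun hc => hne (Sym2.eq_iff.mpr hc)⟩
        · rintro (⟨a', b', ha', hb', hadj, hne⟩ | (⟨h, -⟩ | ⟨-, h⟩) | (⟨h, -⟩ | ⟨-, h⟩))
          · obtain rfl := Option.some_injective V ha'
            obtain rfl := Option.some_injective V hb'
            exact ⟨hadj, fun hc => hne (Sym2.eq_iff.mp hc)⟩
          · exact absurd h (Option.some_ne_none _)
          · exact absurd h (Option.some_ne_none _)
          · exact absurd h (Option.some_ne_none _)
          · exact absurd h (Option.some_ne_none _)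

end Counting

section Construct
variable {V : Type} [Fintype V] [DecidableEq V]

lemma card_edgeSet_subdivide (G : SimpleGraph V) {u v : V} (huv : G.Adj u v) :
    (subdivide G u v).edgeSet.ncard = G.edgeSet.ncard + 1 := by
  rw [edgeSet_subdivide G u v]
  have hinjmap : Function.Injective (Sym2.map (some : V → Option V)) :=
    Sym2.map.injective (Option.some_injective V)
  have hdisj : Disjoint (Sym2.map some '' (G.edgeSet \ {s(u,v)}))
      ({s((none : Option V), some u), s((none : Option V), some v)} : Set (Sym2 (Option V))) := by
    rw [Set.disjoint_right]
    rintro e (rfl | rfl) ⟨e₀, -, hmap⟩ <;>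
    · induction e₀ using Sym2.ind with
      | _ p q =>
        rw [Sym2.map_pair_eq] at hmap
        rcases Sym2.eq_iff.mp hmap with ⟨h, -⟩ | ⟨-, h⟩ <;> exact Option.some_ne_none _ h
  rw [Set.ncard_union_eq hdisj (Set.toFinite _) (Set.toFinite _)]
  rw [Set.ncard_image_of_injective _ hinjmap]
  have hmemuv : s(u,v) ∈ G.edgeSet := (SimpleGraph.mem_edgeSet G).mpr huv
  rw [Set.ncard_diff_singleton_of_mem hmemuv]
  have hpair : ({s((none : Option V), some u), s((none : Option V), some v)} :
      Set (Sym2 (Option V))).ncard = 2 := by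
    refine Set.ncard_pair ?_
    intro h
    rcases Sym2.eq_iff.mp h with ⟨-, h2⟩ | ⟨h1, -⟩
    · exact huv.ne (Option.some_injective V h2)
    · exact Option.some_ne_none _ h1.symm
  rw [hpair]
  have hpos : 0 < G.edgeSet.ncard := (Set.ncard_pos (Set.toFinite _)).mpr ⟨_, hmemuv⟩
  omega

lemma orientation_of_act {G : SimpleGraph V} {u v : V} {R : Set V} (huv : G.Adj u v)
    (hcard : R.ncard + Fintype.card V = G.edgeSet.ncard + 1)
    (hact : ∀ z : Option V, ActV G u v R z) :
    ∃ D : Option V → Option V → Prop, IsBinOrientation G u v R D := by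
  classical
  set H := subdivide G u v with hH
  set t : Option V → ℕ := fun z => Nat.find (hact z) with ht
  set ι : Option V → ℕ := fun z => ((Fintype.equivFin (Option V)) z : ℕ) with hι
  have hιinj : ∀ x y : Option V, ι x = ι y → x = y := fun x y h =>
    (Fintype.equivFin (Option V)).injective (Fin.val_injective h)
  set D : Option V → Option V → Prop := fun x y => H.Adj x y ∧
      (t x < t y ∨ (t x = t y ∧ ι x < ι y)) with hD
  have horient : IsOrientationOf H D := by
    constructor
    · exact fun a b h => h.1
    · intro a b hadj
      constructor
      · rintro ⟨-, h⟩ ⟨-, h'⟩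
        rcases h with h | ⟨h1, h2⟩ <;> rcases h' with h' | ⟨h1', h2'⟩ <;> omega
      · intro hn
        refine ⟨hadj, ?_⟩
        rcases Nat.lt_trichotomy (t a) (t b) with h | h | h
        · exact Or.inl h
        · rcases Nat.lt_trichotomy (ι a) (ι b) with h2 | h2 | h2
          · exact Or.inr ⟨h, h2⟩
          · exact absurd (hιinj a b h2) hadj.ne
          · exact absurd ⟨hadj.symm, Or.inr ⟨h.symm, h2⟩⟩ hn
        · exact absurd ⟨hadj.symm, Or.inl h⟩ hn
  set K := Fintype.card (Option V) with hK
  have hιK : ∀ z : Option V, ι z < K := fun z => (Fintype.equivFin (Option V) z).isLt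
  have hφ : ∀ x y, D x y → t x * K + ι x < t y * K + ι y := by
    intro x y hxy
    have h1 := hιK x
    have h2 := hιK y
    rcases hxy.2 with h | ⟨h3, h4⟩
    · have h5 : (t x + 1) * K ≤ t y * K := Nat.mul_le_mul_right K h
      rw [Nat.succ_mul] at h5
      omega
    · rw [h3]
      omega
  have hac : DigraphAcyclic D := by
    intro a hcyc
    have hmono : ∀ x y : Option V, Relation.TransGen D x y →
        t x * K + ι x < t y * K + ι y := by
      intro x y h
      induction h with
      | single h => exact hφ _ _ h
      | tail h₁ h₂ ih => exact lt_trans ih (hφ _ _ h₂)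
    exact lt_irrefl _ (hmono a a hcyc)
  have ht0 : t none = 0 := (Nat.find_eq_zero (hact none)).mpr rfl
  have hnoarc : ∀ x, ¬ D x none := by
    intro x hx
    rcases hx.2 with h | ⟨h1, h2⟩
    · omega
    · have hfind : Nat.find (hact x) = 0 := h1.trans ht0
      have hs := Nat.find_spec (hact x)
      rw [hfind] at hs
      have hxn : x = none := hs
      subst hxn
      omega
  have hroot : inDeg D none = 0 := by
    rw [inDeg_eq_card]
    refine Finset.card_eq_zero.mpr (Finset.eq_empty_iff_forall_notMem.mpr ?_)
    intro x hx
    simp only [Finset.mem_filter] at hx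
    exact hnoarc x hx.2
  have hlow : ∀ w : V, (if w ∈ R then 2 else 1) ≤ inDeg D (some w) := by
    intro w
    have hfs : Nat.find (hact (some w)) ≠ 0 := by
      intro h0
      have hs := Nat.find_spec (hact (some w))
      rw [h0] at hs
      exact (Option.some_ne_none w) hs
    obtain ⟨k, hk⟩ := Nat.exists_eq_succ_of_ne_zero hfs
    have hs := Nat.find_spec (hact (some w))
    rw [hk] at hs
    have hnot : some w ∉ SAct G u v R k := Nat.find_min (hact (some w)) (by omega)
    rcases hs with hs | ⟨w', hww', hcase⟩
    · exact absurd hs hnot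
    · have hvw : w' = w := Option.some_injective V hww'.symm
      have harck : ∀ x, x ∈ SAct G u v R k → H.Adj x (some w) → D x (some w) := by
        intro x hx hadj
        refine ⟨hadj, Or.inl ?_⟩
        have h1 : Nat.find (hact x) ≤ k := Nat.find_le hx
        have h2 : t (some w) = k + 1 := hk
        have h3 : t x ≤ k := h1
        omega
      rcases hcase with ⟨hwR, x, hadj, hxk⟩ | ⟨hwR, x, y, hxy, hadjx, hadjy, hxk, hyk⟩
      · rw [if_neg (hvw ▸ hwR), inDeg_eq_card]
        refine Finset.card_pos.mpr ⟨x, ?_⟩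
        simp only [Finset.mem_filter, Finset.mem_univ, true_and]
        exact harck x hxk hadj
      · rw [if_pos (hvw ▸ hwR), inDeg_eq_card]
        refine Finset.one_lt_card.mpr ⟨x, ?_, y, ?_, hxy⟩ <;>
          simp only [Finset.mem_filter, Finset.mem_univ, true_and]
        · exact harck x hxk hadjx
        · exact harck y hyk hadjy
  set m : Option V → ℕ := fun z => z.elim 0 (fun w => if w ∈ R then 2 else 1) with hm
  have hmsum : ∑ z : Option V, m z = G.edgeSet.ncard + 1 := by
    rw [Fintype.sum_option]
    have h1 : (m none : ℕ) = 0 := rfl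
    have h2 : ∀ w : V, m (some w) = 1 + (if w ∈ R then 1 else 0) := by
      intro w
      by_cases hw : w ∈ R <;> simp [hm, hw]
    rw [h1]
    simp only [h2]
    rw [Finset.sum_add_distrib, Finset.sum_const]
    have h3 : ∑ x : V, (if x ∈ R then (1:ℕ) else 0) = R.ncard := by
      rw [Finset.sum_boole, Set.ncard_eq_toFinset_card' R, Nat.cast_id]
      congr 1
      ext x
      simp
    rw [h3, smul_eq_mul, mul_one, Finset.card_univ]
    omega
  have hsum : ∑ z : Option V, inDeg D z = G.edgeSet.ncard + 1 := by
    rw [sum_inDeg horient]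
    exact card_edgeSet_subdivide G huv
  have hpt : ∀ z : Option V, m z = inDeg D z := by
    have hle : ∀ z ∈ (Finset.univ : Finset (Option V)), m z ≤ inDeg D z := by
      intro z _
      cases z with
      | none => simp [hm, hroot]
      | some w => exact hlow w
    have heq : ∑ z : Option V, m z = ∑ z : Option V, inDeg D z := by rw [hmsum, hsum]
    intro z
    exact (Finset.sum_eq_sum_iff_of_le hle).mp heq z (Finset.mem_univ z)
  refine ⟨D, horient, hac, hroot, fun w => ⟨⟨?_, ?_⟩, ?_⟩⟩
  · intro hw
    rw [← hpt (some w)]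
    simp [hm, hw]
  · intro h2
    by_contra hw
    have hthis := hpt (some w)
    rw [show m (some w) = 1 by simp [hm, hw]] at hthis
    omega
  · intro hw
    have hthis := hpt (some w)
    rw [show m (some w) = 1 by simp [hm, hw]] at hthis
    omega

end Construct

/-- With `|R| = |E| − |V| + 1`, the triple `(N, e_ρ, R)` is stack-free orientable
iff it has no reticulation cut and `R` is an independent set of `N`. -/
theorem stackfree_orientable_iff {V X : Type} [Fintype V] [DecidableEq V]
    (G : SimpleGraph V) [DecidableRel G.Adj] (hnet : IsUndirBinNet G)
    (labels : X ≃ {w : V // G.degree w = 1})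
    (u v : V) (he : G.Adj u v) (R : Set V)
    (hcard : R.ncard + Fintype.card V = G.edgeSet.ncard + 1) :
    (∃ D : Option V → Option V → Prop, IsStackFreeOrientation G u v R D) ↔
      ((¬ ∃ (R' : Set V) (E' : Set (Sym2 (Option V))), IsRetCut G u v R R' E') ∧
        ∀ a ∈ R, ∀ b ∈ R, ¬ G.Adj a b) := by
  constructor
  · rintro ⟨D, hD⟩
    exact ⟨no_retcut_of_orientation hD.1, indep_of_orientation hD⟩
  · rintro ⟨hnc, hind⟩
    have hact : ∀ z : Option V, ActV G u v R z := by
      intro z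
      by_contra hz
      exact hnc (retcut_of_stall ⟨z, hz⟩)
    obtain ⟨D, hD⟩ := orientation_of_act he hcard hact
    refine ⟨D, hD, ?_⟩
    intro a b hab haR hbR
    exact hind a haR b hbR (hD.1.1 _ _ hab).1
end
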